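/- arXiv:2002.04579 — 4 statements merged into one kernel-verified Lean document; each statement's English description precedes it below -/
import Mathlib

section
/- For every nonnegative integer c and every graph H there exists a constant C = C(H, c) such that every c-degenerate graph on n vertices contains at most C·n^{α(H)} copies of H, where α(H) denotes the independence number of H. -/
open SimpleGraph

/-- A set of vertices is independent: pairwise nonadjacent. -/
def IsIndepSet {V : Type*} (G : SimpleGraph V) (s : Set V) : Prop :=
  s.Pairwise fun a b => ¬ G.Adj a b

/-- The independence number of a graph: the maximum size of an independent set. -/
noncomputable def indepNum {V : Type*} (G : SimpleGraph V) : ℕ :=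
  sSup {n | ∃ s : Finset V, _root_.IsIndepSet G (s : Set V) ∧ s.card = n}

/-- A graph is `c`-degenerate if every nonempty (finite) subgraph has a vertex of
degree at most `c` within it. -/
def Degenerate {V : Type*} (c : ℕ) (G : SimpleGraph V) : Prop :=
  ∀ s : Set V, s.Finite → s.Nonempty → ∃ v ∈ s, (s ∩ G.neighborSet v).ncard ≤ c

/-- The number of copies of `H` in `G`: the number of subgraphs of `G` isomorphic to `H`. -/
noncomputable def copyCount {V W : Type*} (H : SimpleGraph W) (G : SimpleGraph V) : ℕ :=
  {G' : G.Subgraph | Nonempty (G'.coe ≃g H)}.ncard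

/-- `G` contains no subgraph isomorphic to `H`. -/
def ContainsNoCopy {V W : Type*} (H : SimpleGraph W) (G : SimpleGraph V) : Prop :=
  ∀ G' : G.Subgraph, ¬ Nonempty (G'.coe ≃g H)

open Finset

-- L3 : indepNum bounds
lemma le_indepNum {W : Type*} [Fintype W] (H : SimpleGraph W) (s : Finset W)
    (hs : _root_.IsIndepSet H (s : Set W)) : s.card ≤ _root_.indepNum H := by
  refine le_csSup ⟨Fintype.card W, ?_⟩ ⟨s, hs, rfl⟩
  rintro n ⟨t, -, rfl⟩
  exact Finset.card_le_univ t

lemma indepNum_le_card {W : Type*} [Fintype W] (H : SimpleGraph W) :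
    _root_.indepNum H ≤ Fintype.card W := by
  refine csSup_le ⟨0, ⟨∅, by simp [_root_.IsIndepSet], by simp⟩⟩ ?_
  rintro n ⟨t, -, rfl⟩
  exact Finset.card_le_univ t

-- L2 : degeneracy ordering
lemma exists_order {V : Type*} [Fintype V] {c : ℕ} {G : SimpleGraph V}
    (hG : Degenerate c G) :
    ∃ r : V → ℕ, Function.Injective r ∧
      ∀ v, {u | G.Adj v u ∧ r u < r v}.ncard ≤ c := by
  classical
  have key : ∀ s : Finset V, ∃ r : V → ℕ, Set.InjOn r s ∧
      ∀ v ∈ s, {u | u ∈ s ∧ G.Adj v u ∧ r u < r v}.ncard ≤ c := by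
    intro s
    induction s using Finset.strongInduction with
    | _ s ih =>
      rcases s.eq_empty_or_nonempty with rfl | hne
      · exact ⟨fun _ => 0, by simp, by simp⟩
      · obtain ⟨v, hv, hvc⟩ := hG s (s.finite_toSet) (by exact_mod_cast hne)
        obtain ⟨r, hinj, hr⟩ := ih (s.erase v) (Finset.erase_ssubset hv)
        set B := (s.erase v).sup r with hB
        refine ⟨fun x => if x = v then B + 1 else r x, ?_, ?_⟩
        · intro x hx y hy hxy
          simp only at hxy
          by_cases hxv : x = v <;> by_cases hyv : y = v
          · rw [hxv, hyv]
          · rw [if_pos hxv, if_neg hyv] at hxy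
            have : r y ≤ B := Finset.le_sup (Finset.mem_erase.2 ⟨hyv, hy⟩)
            omega
          · rw [if_neg hxv, if_pos hyv] at hxy
            have : r x ≤ B := Finset.le_sup (Finset.mem_erase.2 ⟨hxv, hx⟩)
            omega
          · rw [if_neg hxv, if_neg hyv] at hxy
            exact hinj (Finset.mem_coe.2 (Finset.mem_erase.2 ⟨hxv, hx⟩))
              (Finset.mem_coe.2 (Finset.mem_erase.2 ⟨hyv, hy⟩)) hxy
        · intro w hw
          by_cases hwv : w = v
          · subst hwv
            refine le_trans (Set.ncard_le_ncard ?_ (s.finite_toSet.inter_of_left _)) hvc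
            rintro u ⟨hu1, hu2, -⟩
            exact ⟨hu1, hu2⟩
          · have hsub : {u | u ∈ s ∧ G.Adj w u ∧ (if u = v then B + 1 else r u) <
                (if w = v then B + 1 else r w)} ⊆
                {u | u ∈ s.erase v ∧ G.Adj w u ∧ r u < r w} := by
              rintro u ⟨hu1, hu2, hu3⟩
              rw [if_neg hwv] at hu3
              by_cases huv : u = v
              · exfalso
                rw [if_pos huv] at hu3
                have : r w ≤ B := Finset.le_sup (Finset.mem_erase.2 ⟨hwv, hw⟩)
                omega
              · rw [if_neg huv] at hu3
                exact ⟨Finset.mem_erase.2 ⟨huv, hu1⟩, hu2, hu3⟩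
            refine le_trans (Set.ncard_le_ncard hsub ?_) (hr w (Finset.mem_erase.2 ⟨hwv, hw⟩))
            exact Set.Finite.subset (s.erase v).finite_toSet (fun u hu => hu.1)
  obtain ⟨r, hinj, hr⟩ := key Finset.univ
  refine ⟨r, fun x y => hinj (by simp) (by simp), fun v => ?_⟩
  have := hr v (Finset.mem_univ v)
  simpa using this

lemma copyCount_le_hom {V W : Type*} [Fintype V] [Fintype W] (H : SimpleGraph W) (G : SimpleGraph V) :
    _root_.copyCount H G ≤
      {f : W → V | Function.Injective f ∧ ∀ a b, H.Adj a b → G.Adj (f a) (f b)}.ncard := by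
  classical
  set S : Set G.Subgraph := {G' : G.Subgraph | Nonempty (G'.coe ≃g H)} with hS
  rcases S.eq_empty_or_nonempty with hSe | ⟨G₀, hG₀⟩
  · simp [_root_.copyCount, ← hS, hSe]
  · set f₀ : W → V := fun w => ((hG₀.some.symm w : G₀.verts) : V) with hf₀
    set F : G.Subgraph → (W → V) :=
      fun G' => if h : Nonempty (G'.coe ≃g H) then fun w => ((h.some.symm w : G'.verts) : V)
        else f₀ with hF
    have hFval : ∀ G' (h : Nonempty (G'.coe ≃g H)),
        F G' = fun w => ((h.some.symm w : G'.verts) : V) := by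
      intro G' h; simp only [hF, dif_pos h]
    have hrange : ∀ G' (h : Nonempty (G'.coe ≃g H)), G'.verts = Set.range (F G') := by
      intro G' h
      rw [hFval G' h]
      ext x
      constructor
      · intro hx
        exact ⟨h.some ⟨x, hx⟩, by simp⟩
      · rintro ⟨w, rfl⟩
        exact (h.some.symm w).2
    have hadj : ∀ G₁ G₂ (h₁ : Nonempty (G₁.coe ≃g H)) (h₂ : Nonempty (G₂.coe ≃g H)),
        F G₁ = F G₂ → ∀ x y, G₁.Adj x y → G₂.Adj x y := by
      intro G₁ G₂ h₁ h₂ heq x y hxy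
      have hx : x ∈ G₁.verts := G₁.edge_vert hxy
      have hy : y ∈ G₁.verts := G₁.edge_vert hxy.symm
      set e₁ := h₁.some
      set e₂ := h₂.some
      set a := e₁ ⟨x, hx⟩ with hadef
      set b := e₁ ⟨y, hy⟩ with hbdef
      have hHab : H.Adj a b := by
        rw [hadef, hbdef, e₁.map_rel_iff]
        exact hxy
      have hfa : F G₁ a = x := by rw [hFval G₁ h₁]; simp [hadef, e₁]
      have hfb : F G₁ b = y := by rw [hFval G₁ h₁]; simp [hbdef, e₁]
      have h2a : ((e₂.symm a : G₂.verts) : V) = x := by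
        rw [← hfa, heq, hFval G₂ h₂]
      have h2b : ((e₂.symm b : G₂.verts) : V) = y := by
        rw [← hfb, heq, hFval G₂ h₂]
      have : G₂.coe.Adj (e₂.symm a) (e₂.symm b) := by
        rw [← e₂.map_rel_iff]
        simpa using hHab
      rw [Subgraph.coe_adj] at this
      rwa [h2a, h2b] at this
    refine Set.ncard_le_ncard_of_injOn F ?_ ?_ (Set.toFinite _)
    · intro G' hG'
      rw [hFval G' hG']
      constructor
      · intro w₁ w₂ hw
        exact hG'.some.symm.injective (Subtype.coe_injective hw)
      · intro a b hab
        have : G'.coe.Adj (hG'.some.symm a) (hG'.some.symm b) := by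
          rw [← hG'.some.map_rel_iff]; simpa using hab
        exact G'.adj_sub this
    · intro G₁ h₁ G₂ h₂ heq
      refine SimpleGraph.Subgraph.ext ?_ ?_
      · rw [hrange G₁ h₁, hrange G₂ h₂, heq]
      · ext x y
        exact ⟨hadj G₁ G₂ h₁ h₂ heq x y, hadj G₂ G₁ h₂ h₁ heq.symm x y⟩

lemma rank_inj' {α β : Type*} [LinearOrder β] [DecidableEq α] (e : α → β)
    (he : Function.Injective e) {s : Finset α} {a b : α}
    (ha : a ∈ s) (hb : b ∈ s)
    (h : (s.filter fun z => e z < e a).card = (s.filter fun z => e z < e b).card) : a = b := by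
  by_contra hne
  rcases lt_or_gt_of_ne (fun hc => hne (he hc)) with hlt | hlt
  · have hss : (s.filter fun z => e z < e a) ⊂ s.filter fun z => e z < e b := by
      constructor
      · intro x hx
        simp only [Finset.mem_filter] at hx ⊢
        exact ⟨hx.1, hx.2.trans hlt⟩
      · intro hsub
        have := hsub (Finset.mem_filter.2 ⟨ha, hlt⟩)
        simp at this
    exact absurd h (Finset.card_lt_card hss).ne
  · have hss : (s.filter fun z => e z < e b) ⊂ s.filter fun z => e z < e a := by
      constructor
      · intro x hx
        simp only [Finset.mem_filter] at hx ⊢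
        exact ⟨hx.1, hx.2.trans hlt⟩
      · intro hsub
        have := hsub (Finset.mem_filter.2 ⟨hb, hlt⟩)
        simp at this
    exact absurd h.symm (Finset.card_lt_card hss).ne

lemma exists_sort {W : Type*} [Fintype W] [DecidableEq W] (g : W → ℕ)
    (hg : Function.Injective g) :
    ∃ σ : Fin (Fintype.card W) ≃ W, ∀ i j, i < j → g (σ i) < g (σ j) := by
  classical
  rcases isEmpty_or_nonempty W with hW | hW
  · haveI : IsEmpty (Fin (Fintype.card W)) := by
      rw [Fintype.card_eq_zero]; infer_instance
    exact ⟨Equiv.equivOfIsEmpty _ _, fun i j hij => isEmptyElim i⟩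
  set k := Fintype.card W with hk
  set s : Finset ℕ := Finset.univ.image g with hs
  have hcard : s.card = k := by
    rw [hs, Finset.card_image_of_injective _ hg, Finset.card_univ]
  set e := s.orderIsoOfFin hcard with he
  set σ' : Fin k → W := fun i => Function.invFun g (e i) with hσ'
  have hgσ : ∀ i, g (σ' i) = e i := by
    intro i
    have hmem : (e i : ℕ) ∈ Finset.univ.image g := (e i).2
    obtain ⟨w, -, hw⟩ := Finset.mem_image.1 hmem
    exact Function.invFun_eq ⟨w, hw⟩
  have hinj : Function.Injective σ' := by
    intro i j hij
    have : (e i : ℕ) = e j := by rw [← hgσ, ← hgσ, hij]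
    exact e.injective (Subtype.coe_injective this)
  have hbij : Function.Bijective σ' :=
    (Fintype.bijective_iff_injective_and_card σ').2 ⟨hinj, by simp [hk]⟩
  refine ⟨Equiv.ofBijective σ' hbij, ?_⟩
  intro i j hij
  simp only [Equiv.ofBijective_apply]
  rw [hgσ, hgσ]
  exact_mod_cast e.strictMono hij

lemma card_sorted_le {V W : Type*} [Fintype V] [Fintype W] [DecidableEq V] [DecidableEq W]
    {H : SimpleGraph W} {G : SimpleGraph V} [DecidableRel G.Adj] {c : ℕ} {r : V → ℕ}
    (hrdeg : ∀ v, {u | G.Adj v u ∧ r u < r v}.ncard ≤ c)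
    (σ : Fin (Fintype.card W) ≃ W)
    (T : Finset (Fin (Fintype.card W))) (J : Fin (Fintype.card W) → Fin (Fintype.card W))
    (hJ : ∀ i ∉ T, i < J i ∧ H.Adj (σ i) (σ (J i)))
    (A : Finset (W → V))
    (hA : ∀ f ∈ A, (∀ a b, H.Adj a b → G.Adj (f a) (f b)) ∧
          ∀ i j, i < j → r (f (σ i)) < r (f (σ j))) :
    A.card ≤ Fintype.card V ^ T.card * c ^ (Fintype.card W - T.card) := by
  classical
  set eV := Fintype.equivFin V with heV
  set B : V → Finset V := fun y => Finset.univ.filter (fun z => G.Adj y z ∧ r z < r y) with hB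
  have hBc : ∀ y, (B y).card ≤ c := by
    intro y
    have h1 := hrdeg y
    have h2 : {u | G.Adj y u ∧ r u < r y} = ↑(B y) := by ext z; simp [hB]
    rwa [h2, Set.ncard_coe_finset] at h1
  have hmemB : ∀ f ∈ A, ∀ i ∉ T, f (σ i) ∈ B (f (σ (J i))) := by
    intro f hf i hiT
    obtain ⟨hhom, hsort⟩ := hA f hf
    obtain ⟨hij, hadj⟩ := hJ i hiT
    simp only [hB, Finset.mem_filter, Finset.mem_univ, true_and]
    exact ⟨(hhom _ _ hadj).symm, hsort _ _ hij⟩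
  set Φ : (W → V) → (Fin (Fintype.card W) → ℕ) := fun f i =>
    if i ∈ T then (eV (f (σ i)) : ℕ)
    else ((B (f (σ (J i)))).filter (fun z => eV z < eV (f (σ i)))).card with hΦ
  have hmaps : ∀ f ∈ A, Φ f ∈ Fintype.piFinset (fun i : Fin (Fintype.card W) =>
      Finset.range (if i ∈ T then Fintype.card V else c)) := by
    intro f hf
    rw [Fintype.mem_piFinset]
    intro i
    rw [Finset.mem_range]
    by_cases hiT : i ∈ T
    · simp only [hΦ, if_pos hiT]
      exact (eV (f (σ i))).isLt
    · simp only [hΦ, if_neg hiT]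
      have h1 := hmemB f hf i hiT
      have h2s : (B (f (σ (J i)))).filter (fun z => eV z < eV (f (σ i))) ⊂
          B (f (σ (J i))) := by
        constructor
        · exact Finset.filter_subset _ _
        · intro hsub
          have := hsub h1
          simp at this
      exact lt_of_lt_of_le (Finset.card_lt_card h2s) (hBc _)
  have hinj : Set.InjOn Φ A := by
    intro f hf g hg hfg
    have key : ∀ d (i : Fin (Fintype.card W)), Fintype.card W - i.val ≤ d →
        f (σ i) = g (σ i) := by
      intro d
      induction d with
      | zero => intro i hi; exact absurd hi (by have := i.isLt; omega)
      | succ d ih =>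
        intro i hi
        by_cases hiT : i ∈ T
        · have h1 := congrFun hfg i
          simp only [hΦ, if_pos hiT] at h1
          exact eV.injective (Fin.val_injective h1)
        · obtain ⟨hij, -⟩ := hJ i hiT
          have hJd : Fintype.card W - (J i).val ≤ d := by
            have : i.val < (J i).val := hij
            omega
          have hgj : f (σ (J i)) = g (σ (J i)) := ih (J i) hJd
          have h1 : f (σ i) ∈ B (f (σ (J i))) := hmemB f hf i hiT
          have h2 : g (σ i) ∈ B (f (σ (J i))) := by rw [hgj]; exact hmemB g hg i hiT
          have h3 := congrFun hfg i
          simp only [hΦ, if_neg hiT] at h3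
          rw [← hgj] at h3
          exact rank_inj' eV eV.injective h1 h2 h3
    funext w
    have := key (Fintype.card W) (σ.symm w) (by omega)
    simpa using this
  have hcard := Finset.card_le_card_of_injOn Φ hmaps hinj
  rw [Fintype.card_piFinset] at hcard
  refine hcard.trans (le_of_eq ?_)
  have h1 : (Finset.univ.filter (fun i : Fin (Fintype.card W) => i ∈ T)) = T := by ext i; simp
  have h2 : (Finset.univ.filter (fun i : Fin (Fintype.card W) => i ∉ T)) = Tᶜ := by ext i; simp
  rw [← Finset.prod_filter_mul_prod_filter_not Finset.univ (· ∈ T)]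
  congr 1
  · rw [Finset.prod_congr h1 (fun i hi => by rw [Finset.card_range, if_pos hi]),
      Finset.prod_const]
  · rw [Finset.prod_congr h2 (fun i hi => by
      rw [Finset.card_range, if_neg (Finset.mem_compl.1 hi)]), Finset.prod_const,
      Finset.card_compl, Fintype.card_fin]

/-- For every `c` and every graph `H` there is a constant `C` such that every
`c`-degenerate graph on `n` vertices contains at most `C·n^α(H)` copies of `H`. -/
theorem stmt5 (c : ℕ) {W : Type} [Fintype W] (H : SimpleGraph W) :
    ∃ C : ℕ, ∀ (V : Type) [Fintype V] (G : SimpleGraph V), Degenerate c G →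
      _root_.copyCount H G ≤ C * Fintype.card V ^ _root_.indepNum H := by
  classical
  refine ⟨Fintype.card (Fin (Fintype.card W) ≃ W) * (c + 1) ^ Fintype.card W, ?_⟩
  intro V _ G hG
  have step1 := copyCount_le_hom H G
  set hom : Set (W → V) :=
    {f | Function.Injective f ∧ ∀ a b, H.Adj a b → G.Adj (f a) (f b)} with hhom
  have homle : hom.ncard ≤ Fintype.card V ^ Fintype.card W := by
    refine le_trans (Set.ncard_le_ncard (Set.subset_univ _) Set.finite_univ) ?_
    rw [Set.ncard_univ, Nat.card_eq_fintype_card, Fintype.card_fun]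
  by_cases hV : Fintype.card V = 0
  · rcases Nat.eq_zero_or_pos (Fintype.card W) with hW | hW
    · have hα : _root_.indepNum H = 0 := Nat.le_zero.1 ((indepNum_le_card H).trans_eq hW)
      have hC : 1 ≤ Fintype.card (Fin (Fintype.card W) ≃ W) := by
        refine Fintype.card_pos_iff.2 ⟨?_⟩
        haveI : IsEmpty W := Fintype.card_eq_zero_iff.1 hW
        haveI : IsEmpty (Fin (Fintype.card W)) := by rw [Fintype.card_eq_zero]; infer_instance
        exact Equiv.equivOfIsEmpty _ _
      calc _root_.copyCount H G ≤ hom.ncard := step1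
        _ ≤ Fintype.card V ^ Fintype.card W := homle
        _ = 1 := by rw [hW, pow_zero]
        _ ≤ _ := by
            rw [hα, pow_zero, mul_one]
            exact le_trans hC (Nat.le_mul_of_pos_right _ (by positivity))
    · calc _root_.copyCount H G ≤ hom.ncard := step1
        _ ≤ Fintype.card V ^ Fintype.card W := homle
        _ = 0 := by rw [hV, zero_pow hW.ne']
        _ ≤ _ := Nat.zero_le _
  · have hn1 : 1 ≤ Fintype.card V := Nat.pos_of_ne_zero hV
    obtain ⟨r, hrinj, hrdeg⟩ := exists_order hG
    set homF : Finset (W → V) := Finset.univ.filter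
      (fun f => Function.Injective f ∧ ∀ a b, H.Adj a b → G.Adj (f a) (f b)) with hhomF
    have hom_eq : hom.ncard = homF.card := by
      rw [show hom = ↑homF by ext f; simp [hhom, hhomF], Set.ncard_coe_finset]
    set A : (Fin (Fintype.card W) ≃ W) → Finset (W → V) := fun σ =>
      homF.filter (fun f => ∀ i j, i < j → r (f (σ i)) < r (f (σ j))) with hA
    have hcover : homF ⊆ Finset.univ.biUnion A := by
      intro f hf
      have hf' := hf
      simp only [hhomF, Finset.mem_filter, Finset.mem_univ, true_and] at hf'
      obtain ⟨hfinj, hfhom⟩ := hf'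
      have hginj : Function.Injective (fun w => r (f w)) := fun a b hab => hfinj (hrinj hab)
      obtain ⟨σ, hσ⟩ := exists_sort _ hginj
      exact Finset.mem_biUnion.2 ⟨σ, Finset.mem_univ _, Finset.mem_filter.2 ⟨hf, hσ⟩⟩
    have hbound : ∀ σ : Fin (Fintype.card W) ≃ W,
        (A σ).card ≤ (c + 1) ^ Fintype.card W * Fintype.card V ^ _root_.indepNum H := by
      intro σ
      set T : Finset (Fin (Fintype.card W)) :=
        Finset.univ.filter (fun i => ∀ j, H.Adj (σ i) (σ j) → j < i) with hT
      have hJex : ∀ i ∉ T, ∃ j, i < j ∧ H.Adj (σ i) (σ j) := by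
        intro i hiT
        simp only [hT, Finset.mem_filter, Finset.mem_univ, true_and, not_forall] at hiT
        obtain ⟨j, hadj, hnot⟩ := hiT
        have hne : i ≠ j := by
          rintro rfl
          exact H.loopless.irrefl _ hadj
        exact ⟨j, lt_of_le_of_ne (not_lt.1 hnot) hne, hadj⟩
      set J : Fin (Fintype.card W) → Fin (Fintype.card W) := fun i =>
        if h : ∃ j, i < j ∧ H.Adj (σ i) (σ j) then h.choose else i with hJdef
      have hJ : ∀ i ∉ T, i < J i ∧ H.Adj (σ i) (σ (J i)) := by
        intro i hiT
        have he := hJex i hiT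
        simp only [hJdef, dif_pos he]
        exact ⟨he.choose_spec.1, he.choose_spec.2⟩
      have hprops : ∀ f ∈ A σ, (∀ a b, H.Adj a b → G.Adj (f a) (f b)) ∧
          ∀ i j, i < j → r (f (σ i)) < r (f (σ j)) := by
        intro f hf
        simp only [hA, hhomF, Finset.mem_filter, Finset.mem_univ, true_and] at hf
        exact ⟨hf.1.2, hf.2⟩
      have hmain := card_sorted_le hrdeg σ T J hJ (A σ) hprops
      have hTind : T.card ≤ _root_.indepNum H := by
        have himg : (T.image (fun i => σ i)).card = T.card :=
          Finset.card_image_of_injective _ σ.injective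
        refine le_trans himg.symm.le (le_indepNum H _ ?_)
        intro a ha b hb hab hadj
        simp only [Finset.coe_image, Set.mem_image, Finset.mem_coe] at ha hb
        obtain ⟨i, hiT, rfl⟩ := ha
        obtain ⟨j, hjT, rfl⟩ := hb
        have hij : i ≠ j := fun h => hab (by rw [h])
        simp only [hT, Finset.mem_filter, Finset.mem_univ, true_and] at hiT hjT
        rcases lt_or_gt_of_ne hij with hlt | hlt
        · exact absurd (hiT j hadj) (by omega)
        · exact absurd (hjT i hadj.symm) (by omega)
      calc (A σ).card ≤ Fintype.card V ^ T.card * c ^ (Fintype.card W - T.card) := hmain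
        _ ≤ Fintype.card V ^ _root_.indepNum H * (c + 1) ^ Fintype.card W := by
            refine Nat.mul_le_mul (Nat.pow_le_pow_right hn1 hTind) ?_
            exact le_trans (Nat.pow_le_pow_left (Nat.le_succ c) _)
              (Nat.pow_le_pow_right (Nat.succ_pos c) (Nat.sub_le _ _))
        _ = (c + 1) ^ Fintype.card W * Fintype.card V ^ _root_.indepNum H := mul_comm _ _
    calc _root_.copyCount H G ≤ hom.ncard := step1
      _ = homF.card := hom_eq
      _ ≤ (Finset.univ.biUnion A).card := Finset.card_le_card hcover
      _ ≤ ∑ σ : Fin (Fintype.card W) ≃ W, (A σ).card := Finset.card_biUnion_le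
      _ ≤ ∑ _σ : Fin (Fintype.card W) ≃ W,
            (c + 1) ^ Fintype.card W * Fintype.card V ^ _root_.indepNum H :=
          Finset.sum_le_sum (fun σ _ => hbound σ)
      _ = Fintype.card (Fin (Fintype.card W) ≃ W) *
            ((c + 1) ^ Fintype.card W * Fintype.card V ^ _root_.indepNum H) := by
          rw [Finset.sum_const, smul_eq_mul, Finset.card_univ]
      _ = Fintype.card (Fin (Fintype.card W) ≃ W) * (c + 1) ^ Fintype.card W *
            Fintype.card V ^ _root_.indepNum H := by ring
end

section
/- For every graph H there exists a constant C = C(H) such that every planar graph on n vertices contains at most C·n^{α(H)} copies of H, where α(H) is the independence number of H. -/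
open SimpleGraph

/-- `H` is a minor of `G`: witnessed by disjoint connected branch sets. -/
def HasMinor {V W : Type*} (G : SimpleGraph V) (H : SimpleGraph W) : Prop :=
  ∃ f : W → Set V,
    (∀ w, (f w).Nonempty) ∧
    (∀ w, (G.induce (f w)).Connected) ∧
    (∀ w₁ w₂, w₁ ≠ w₂ → Disjoint (f w₁) (f w₂)) ∧
    (∀ w₁ w₂, H.Adj w₁ w₂ → ∃ v₁ ∈ f w₁, ∃ v₂ ∈ f w₂, G.Adj v₁ v₂)

/-- Planarity of a finite simple graph, via Wagner's theorem: a graph is planar iff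
it has neither `K₅` nor `K₃,₃` as a minor. -/
def IsPlanar {V : Type*} (G : SimpleGraph V) : Prop :=
  ¬ HasMinor G (completeGraph (Fin 5)) ∧
  ¬ HasMinor G (completeBipartiteGraph (Fin 3) (Fin 3))

attribute [local instance] Classical.propDecidable

namespace StmtAux

variable {V W K : Type}

noncomputable def m [Fintype V] (G : SimpleGraph V) : ℕ :=
  (Finset.univ.filter fun p : V × V => G.Adj p.1 p.2).card

def contract (G : SimpleGraph V) (x y : V) : SimpleGraph {z : V // z ≠ y} where
  Adj a b := a ≠ b ∧ (G.Adj a.1 b.1 ∨ (a.1 = x ∧ G.Adj y b.1) ∨ (b.1 = x ∧ G.Adj y a.1))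
  symm := by
    constructor
    rintro a b ⟨hab, h⟩
    refine ⟨hab.symm, ?_⟩
    rcases h with h | ⟨h1, h2⟩ | ⟨h1, h2⟩
    · exact Or.inl h.symm
    · exact Or.inr (Or.inr ⟨h1, h2⟩)
    · exact Or.inr (Or.inl ⟨h1, h2⟩)
  loopless := ⟨fun a h => h.1 rfl⟩

lemma m_eq_sum [Fintype V] (G : SimpleGraph V) :
    m G = ∑ v : V, (Finset.univ.filter fun u => G.Adj v u).card := by
  rw [m, Finset.card_eq_sum_card_fiberwise (f := Prod.fst) (t := Finset.univ)
    (fun x _ => Finset.mem_univ _)]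
  refine Finset.sum_congr rfl fun v _ => ?_
  refine Finset.card_bij (fun p _ => p.2) ?_ ?_ ?_
  · rintro ⟨a, b⟩ hp
    simp only [Finset.mem_filter, Finset.mem_univ, true_and] at hp ⊢
    rcases hp with ⟨h1, h2⟩
    subst h2; exact h1
  · rintro ⟨a, b⟩ ha ⟨c, d⟩ hc h
    simp only [Finset.mem_filter, Finset.mem_univ, true_and] at ha hc
    cases h
    rw [ha.2, hc.2]
  · intro u hu
    simp only [Finset.mem_filter, Finset.mem_univ, true_and] at hu
    exact ⟨(v, u), by simp [hu], rfl⟩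

lemma indep_card_le [Fintype W] (H : SimpleGraph W) (s : Finset W)
    (h : _root_.IsIndepSet H (s : Set W)) : s.card ≤ _root_.indepNum H := by
  apply le_csSup
  · exact ⟨Fintype.card W, by rintro n ⟨s, _, rfl⟩; exact Finset.card_le_univ s⟩
  · exact ⟨s, h, rfl⟩

lemma m_delete [Fintype V] (G : SimpleGraph V) (v : V) :
    m G = m (G.induce {u | u ≠ v}) + 2 * (Finset.univ.filter fun u => G.Adj v u).card := by
  classical
  have key := Finset.card_filter_add_card_filter_not
    (s := Finset.univ.filter fun p : V × V => G.Adj p.1 p.2)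
    (p := fun p : V × V => p.1 = v ∨ p.2 = v)
  beta_reduce at key
  rw [m, ← key]
  have h1 : ((Finset.univ.filter fun p : V × V => G.Adj p.1 p.2).filter
      fun p : V × V => p.1 = v ∨ p.2 = v).card
      = 2 * (Finset.univ.filter fun u => G.Adj v u).card := by
    rw [Finset.filter_or, Finset.card_union_of_disjoint]
    · have e1 : ((Finset.univ.filter fun p : V × V => G.Adj p.1 p.2).filter
          fun p : V × V => p.1 = v).card = (Finset.univ.filter fun u => G.Adj v u).card := by
        refine Finset.card_bij (fun p _ => p.2) ?_ ?_ ?_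
        · rintro ⟨a, b⟩ hp
          simp only [Finset.mem_filter, Finset.mem_univ, true_and] at hp ⊢
          rcases hp with ⟨h1, h2⟩; subst h2; exact h1
        · rintro ⟨a, b⟩ ha ⟨c, d⟩ hc h
          simp only [Finset.mem_filter, Finset.mem_univ, true_and] at ha hc
          cases h; rw [ha.2, hc.2]
        · intro u hu
          simp only [Finset.mem_filter, Finset.mem_univ, true_and] at hu
          exact ⟨(v, u), by simp [hu], rfl⟩
      have e2 : ((Finset.univ.filter fun p : V × V => G.Adj p.1 p.2).filter
          fun p : V × V => p.2 = v).card = (Finset.univ.filter fun u => G.Adj v u).card := by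
        refine Finset.card_bij (fun p _ => p.1) ?_ ?_ ?_
        · rintro ⟨a, b⟩ hp
          simp only [Finset.mem_filter, Finset.mem_univ, true_and] at hp ⊢
          rcases hp with ⟨h1, h2⟩; subst h2; exact h1.symm
        · rintro ⟨a, b⟩ ha ⟨c, d⟩ hc h
          simp only [Finset.mem_filter, Finset.mem_univ, true_and] at ha hc
          cases h; rw [ha.2, hc.2]
        · intro u hu
          simp only [Finset.mem_filter, Finset.mem_univ, true_and] at hu
          exact ⟨(u, v), by simp [hu.symm], rfl⟩
      rw [e1, e2]; ring
    · rw [Finset.disjoint_left]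
      rintro ⟨a, b⟩ ha hb
      simp only [Finset.mem_filter, Finset.mem_univ, true_and] at ha hb
      rcases ha with ⟨ha1, ha2⟩
      rcases hb with ⟨hb1, hb2⟩
      rw [ha2, hb2] at ha1
      exact G.loopless.irrefl v ha1
  have h2 : ((Finset.univ.filter fun p : V × V => G.Adj p.1 p.2).filter
      fun p : V × V => ¬(p.1 = v ∨ p.2 = v)).card = m (G.induce {u | u ≠ v}) := by
    rw [m]
    refine Finset.card_bij' (fun p hp => ?_) (fun q _ => (q.1.1, q.2.1)) ?_ ?_ ?_ ?_
    · have hp' := Finset.mem_filter.1 hp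
      have hne := hp'.2
      push_neg at hne
      exact (⟨⟨p.1, hne.1⟩, ⟨p.2, hne.2⟩⟩ : {u : V // u ≠ v} × {u : V // u ≠ v})
    · rintro ⟨a, b⟩ hp
      have hp' := Finset.mem_filter.1 hp
      simp only [Finset.mem_filter, Finset.mem_univ, true_and] at hp' ⊢
      exact hp'.1
    · rintro ⟨⟨a, ha⟩, ⟨b, hb⟩⟩ hq
      simp only [Finset.mem_filter, Finset.mem_univ, true_and] at hq ⊢
      exact ⟨hq, by push_neg; exact ⟨ha, hb⟩⟩
    · rintro ⟨a, b⟩ hp; rfl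
    · rintro ⟨⟨a, ha⟩, ⟨b, hb⟩⟩ hq; rfl
  rw [h1, h2]; ring

lemma mem_drop_of_indexOf_lt {l : List V} {u : V} (hu : u ∈ l) {k : ℕ}
    (h : k < l.idxOf u) : u ∈ l.drop (k + 1) := by
  classical
  have hlen : l.idxOf u < l.length := List.idxOf_lt_length_iff.2 hu
  rw [List.mem_iff_getElem]
  refine ⟨l.idxOf u - (k + 1), by rw [List.length_drop]; omega, ?_⟩
  rw [List.getElem_drop]
  have hidx : (k + 1) + (l.idxOf u - (k + 1)) = l.idxOf u := by omega
  convert List.getElem_idxOf hlen using 2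

lemma exists_list [Fintype V] (G : SimpleGraph V) (d : ℕ)
    (hd : ∀ s : Finset V, s.Nonempty → ∃ v ∈ s, (s.filter fun u => G.Adj v u).card ≤ d) :
    ∀ (n : ℕ) (s : Finset V), s.card = n → ∃ l : List V, l.Nodup ∧ l.toFinset = s ∧
      ∀ (i : ℕ) (h : i < l.length),
        ((l.drop (i + 1)).filter (fun u => G.Adj (l[i]'h) u)).length ≤ d := by
  intro n
  induction n with
  | zero =>
    intro s hs
    refine ⟨[], by simp, ?_, by simp⟩
    simp [Finset.card_eq_zero.1 hs]
  | succ n ih =>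
    intro s hs
    have hne : s.Nonempty := Finset.card_pos.1 (by omega)
    obtain ⟨v, hv, hvd⟩ := hd s hne
    obtain ⟨l', hnd, htf, hprop⟩ := ih (s.erase v) (by rw [Finset.card_erase_of_mem hv]; omega)
    refine ⟨v :: l', ?_, ?_, ?_⟩
    · refine List.nodup_cons.2 ⟨?_, hnd⟩
      intro hmem
      have : v ∈ s.erase v := htf ▸ List.mem_toFinset.2 hmem
      exact (Finset.notMem_erase v s) this
    · rw [List.toFinset_cons, htf, Finset.insert_erase hv]
    · intro i h
      match i with
      | 0 =>
        simp only [List.getElem_cons_zero, List.drop_succ_cons, List.drop_zero]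
        have h1 : (l'.filter (fun u => G.Adj v u)).length
            = ((s.erase v).filter fun u => G.Adj v u).card := by
          rw [← List.toFinset_card_of_nodup (hnd.filter _), List.toFinset_filter, htf]
          congr 1
          apply Finset.filter_congr
          intro u _
          simp
        rw [h1]
        calc ((s.erase v).filter fun u => G.Adj v u).card
            ≤ (s.filter fun u => G.Adj v u).card :=
              Finset.card_le_card (Finset.filter_subset_filter _ (Finset.erase_subset v s))
          _ ≤ d := hvd
      | (j + 1) =>
        simp only [List.getElem_cons_succ, List.drop_succ_cons]
        exact hprop j (by simpa using h)

lemma exists_rank [Fintype V] (G : SimpleGraph V) (d : ℕ)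
    (hd : ∀ s : Finset V, s.Nonempty → ∃ v ∈ s, (s.filter fun u => G.Adj v u).card ≤ d) :
    ∃ r : V → ℕ, Function.Injective r ∧
      ∀ v, (Finset.univ.filter fun u => G.Adj v u ∧ r v < r u).card ≤ d := by
  classical
  obtain ⟨l, hnd, htf, hprop⟩ := exists_list G d hd (Finset.univ.card) Finset.univ rfl
  have hmem : ∀ v : V, v ∈ l := fun v => by
    have : v ∈ l.toFinset := htf ▸ Finset.mem_univ v
    exact List.mem_toFinset.1 this
  refine ⟨fun v => l.idxOf v, ?_, ?_⟩
  · intro u v h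
    exact (List.idxOf_inj (hmem u)).1 h
  · intro v
    have hv : l.idxOf v < l.length := List.idxOf_lt_length_iff.2 (hmem v)
    have hLv : l[l.idxOf v]'hv = v := List.getElem_idxOf hv
    calc (Finset.univ.filter fun u => G.Adj v u ∧ l.idxOf v < l.idxOf u).card
        ≤ ((l.drop (l.idxOf v + 1)).filter (fun u => G.Adj (l[l.idxOf v]'hv) u)).toFinset.card := by
          apply Finset.card_le_card
          intro u hu
          simp only [Finset.mem_filter, Finset.mem_univ, true_and] at hu
          rw [List.mem_toFinset, List.mem_filter]
          refine ⟨mem_drop_of_indexOf_lt (hmem u) hu.2, ?_⟩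
          rw [hLv]
          simp [hu.1]
      _ ≤ ((l.drop (l.idxOf v + 1)).filter (fun u => G.Adj (l[l.idxOf v]'hv) u)).length :=
          List.toFinset_card_le _
      _ ≤ d := hprop _ hv

lemma getD_of_lt {l : List V} {i : ℕ} (h : i < l.length) (a : V) : l.getD i a = l[i]'h := by
  simp [List.getD_eq_getElem?_getD, List.getElem?_eq_getElem h]

lemma exists_emb (G : SimpleGraph V) (H : SimpleGraph W) :
    ∃ F : ↥{G' : G.Subgraph | Nonempty (G'.coe ≃g H)} → (W → V),
      Function.Injective F ∧
      ∀ P : ↥{G' : G.Subgraph | Nonempty (G'.coe ≃g H)},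
        ∀ w w', H.Adj w w' → G.Adj (F P w) (F P w') := by
  classical
  have hmem : ∀ P : ↥{G' : G.Subgraph | Nonempty (G'.coe ≃g H)},
      Nonempty ((P : G.Subgraph).coe ≃g H) := fun P => P.2
  let e : ∀ P : ↥{G' : G.Subgraph | Nonempty (G'.coe ≃g H)},
      (P : G.Subgraph).coe ≃g H := fun P => (hmem P).some
  refine ⟨fun P w => ((e P).symm w).val, ?_, ?_⟩
  · -- injectivity
    have hverts : ∀ P : ↥{G' : G.Subgraph | Nonempty (G'.coe ≃g H)},
        (P : G.Subgraph).verts = Set.range (fun w => ((e P).symm w).val) := by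
      intro P
      ext v
      constructor
      · intro hv
        exact ⟨e P ⟨v, hv⟩, by simp⟩
      · rintro ⟨w, rfl⟩
        exact ((e P).symm w).2
    have hadj : ∀ (P : ↥{G' : G.Subgraph | Nonempty (G'.coe ≃g H)}) (a b : V),
        (P : G.Subgraph).Adj a b ↔
          ∃ w w', H.Adj w w' ∧ ((e P).symm w).val = a ∧ ((e P).symm w').val = b := by
      intro P a b
      constructor
      · intro h
        refine ⟨e P ⟨a, h.fst_mem⟩, e P ⟨b, h.snd_mem⟩, ?_, by simp, by simp⟩
        rw [Iso.map_adj_iff]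
        exact h.coe
      · rintro ⟨w, w', hww, rfl, rfl⟩
        have : (P : G.Subgraph).coe.Adj ((e P).symm w) ((e P).symm w') := by
          rw [Iso.map_adj_iff]
          exact hww
        exact this
    intro P1 P2 h
    apply Subtype.ext
    ext a b
    · rw [hverts P1, hverts P2,
        show (fun w => (((e P1).symm w : ↥(P1 : G.Subgraph).verts) : V))
          = fun w => (((e P2).symm w : ↥(P2 : G.Subgraph).verts) : V) from h]
    · rw [hadj P1, hadj P2]
      constructor
      · rintro ⟨w, w', hww, h1, h2⟩
        exact ⟨w, w', hww, (congrFun h w).symm.trans h1, (congrFun h w').symm.trans h2⟩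
      · rintro ⟨w, w', hww, h1, h2⟩
        exact ⟨w, w', hww, (congrFun h w).trans h1, (congrFun h w').trans h2⟩
  · intro P w w' hww
    have : (P : G.Subgraph).coe.Adj ((e P).symm w) ((e P).symm w') := by
      rw [Iso.map_adj_iff]; exact hww
    exact ((P : G.Subgraph).coe_adj_sub _ _ this)


lemma card_copies_le [Fintype V] [Fintype W] [Nonempty V] (G : SimpleGraph V) (H : SimpleGraph W)
    (d : ℕ) (hd1 : 0 < d) (r : V → ℕ) (hr : Function.Injective r)
    (hdeg : ∀ v, (Finset.univ.filter fun u => G.Adj v u ∧ r v < r u).card ≤ d) :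
    _root_.copyCount H G ≤ (2 ^ Fintype.card W * (Fintype.card W * d) ^ Fintype.card W)
      * Fintype.card V ^ _root_.indepNum H := by
  classical
  obtain ⟨F, hFinj, hFadj⟩ := exists_emb G H
  set α := _root_.indepNum H with hα
  let defaultV : V := Classical.arbitrary V
  let sinks : (W → V) → Finset W := fun φ =>
    Finset.univ.filter fun w => ∀ w', H.Adj w w' → r (φ w) < r (φ w')
  let laterF : V → Finset V := fun v => Finset.univ.filter fun u => G.Adj v u ∧ r v < r u
  have sinks_card : ∀ φ, (sinks φ).card ≤ α := by
    intro φ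
    apply indep_card_le
    intro a ha b hb hab hadj
    simp only [sinks, Finset.coe_filter, Set.mem_setOf_eq, Finset.mem_univ, true_and] at ha hb
    have h1 := ha b hadj
    have h2 := hb a hadj.symm
    omega
  have nonsinkEx : ∀ (P : ↥{G' : G.Subgraph | Nonempty (G'.coe ≃g H)}) (w : W), w ∉ sinks (F P) → ∃ q : W × Fin d,
      r (F P q.1) < r (F P w) ∧
      F P w = ((laterF (F P q.1)).toList).getD q.2 defaultV := by
    intro P w hw
    simp only [sinks, Finset.mem_filter, Finset.mem_univ, true_and, not_forall] at hw
    obtain ⟨w', hadj, hge⟩ := hw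
    have hGadj : G.Adj (F P w) (F P w') := hFadj P w w' hadj
    have hne : r (F P w) ≠ r (F P w') := fun hc => G.ne_of_adj hGadj (hr hc)
    have hlt : r (F P w') < r (F P w) := by omega
    have hmem : F P w ∈ laterF (F P w') := by
      simp only [laterF, Finset.mem_filter, Finset.mem_univ, true_and]
      exact ⟨hGadj.symm, hlt⟩
    have hmemL : F P w ∈ (laterF (F P w')).toList := Finset.mem_toList.2 hmem
    have hidx : (laterF (F P w')).toList.idxOf (F P w) < (laterF (F P w')).toList.length :=
      List.idxOf_lt_length_iff.2 hmemL
    have hidxd : (laterF (F P w')).toList.idxOf (F P w) < d := by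
      have h1 := (laterF (F P w')).length_toList
      have h2 : (laterF (F P w')).card ≤ d := hdeg _
      omega
    refine ⟨(w', ⟨_, hidxd⟩), hlt, ?_⟩
    rw [getD_of_lt hidx]
    exact (List.getElem_idxOf hidx).symm
  let code : ↥{G' : G.Subgraph | Nonempty (G'.coe ≃g H)} → Finset W × (Fin α → V) × (W → W × Fin d) := fun P =>
    (sinks (F P),
     fun j => ((sinks (F P)).toList.map (F P)).getD j.val defaultV,
     fun w => if hw : w ∈ sinks (F P) then (w, ⟨0, hd1⟩)
       else Classical.choose (nonsinkEx P w hw))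
  have hcodeinj : Function.Injective code := by
    intro P1 P2 hc
    have hS : sinks (F P1) = sinks (F P2) := congrArg Prod.fst hc
    have hc2 := congrArg Prod.snd hc
    have hc21 := congrArg Prod.fst hc2
    have hc22 := congrArg Prod.snd hc2
    have main : ∀ (N : ℕ) (w : W), r (F P1 w) = N → F P1 w = F P2 w := by
      intro N
      induction N using Nat.strong_induction_on with
      | _ N IH =>
        intro w hN
        by_cases hw : w ∈ sinks (F P1)
        · -- sink case
          have hwL : w ∈ (sinks (F P1)).toList := Finset.mem_toList.2 hw
          have hi : (sinks (F P1)).toList.idxOf w < (sinks (F P1)).toList.length :=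
            List.idxOf_lt_length_iff.2 hwL
          have hiα : (sinks (F P1)).toList.idxOf w < α := by
            have := (sinks (F P1)).length_toList
            have := sinks_card (F P1)
            omega
          have h1 := congrFun hc21 (⟨(sinks (F P1)).toList.idxOf w, hiα⟩ : Fin α)
          have e1 : ((sinks (F P1)).toList.map (F P1)).getD ((sinks (F P1)).toList.idxOf w)
              defaultV = F P1 w := by
            rw [getD_of_lt (by simpa using hi)]
            rw [List.getElem_map]
            congr 1
            exact List.getElem_idxOf hi
          have e2 : ((sinks (F P2)).toList.map (F P2)).getD ((sinks (F P1)).toList.idxOf w)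
              defaultV = F P2 w := by
            rw [← hS]
            rw [getD_of_lt (by simpa using hi)]
            rw [List.getElem_map]
            congr 1
            exact List.getElem_idxOf hi
          rw [← e1, ← e2]
          exact h1
        · -- nonsink case
          have hw2 : w ∉ sinks (F P2) := by rw [← hS]; exact hw
          have h3 := congrFun hc22 w
          simp only [code, dif_neg hw, dif_neg hw2] at h3
          obtain ⟨hlt1, heq1⟩ := Classical.choose_spec (nonsinkEx P1 w hw)
          obtain ⟨hlt2, heq2⟩ := Classical.choose_spec (nonsinkEx P2 w hw2)
          set q1 := Classical.choose (nonsinkEx P1 w hw)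
          set q2 := Classical.choose (nonsinkEx P2 w hw2)
          have hq : q1 = q2 := h3
          have hIH : F P1 q1.1 = F P2 q1.1 := IH (r (F P1 q1.1)) (by omega) q1.1 rfl
          rw [heq1, heq2, ← hq, ← hIH]
        
    have : F P1 = F P2 := funext fun w => main (r (F P1 w)) w rfl
    exact hFinj this
  have hcard : _root_.copyCount H G = Nat.card ↥{G' : G.Subgraph | Nonempty (G'.coe ≃g H)} := by
    rw [_root_.copyCount, ← Nat.card_coe_set_eq]
  have hle : Nat.card ↥{G' : G.Subgraph | Nonempty (G'.coe ≃g H)}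
      ≤ Nat.card (Finset W × (Fin α → V) × (W → W × Fin d)) :=
    Nat.card_le_card_of_injective code hcodeinj
  have hT : Nat.card (Finset W × (Fin α → V) × (W → W × Fin d))
      = 2 ^ Fintype.card W * (Fintype.card V ^ α * (Fintype.card W * d) ^ Fintype.card W) := by
    rw [Nat.card_eq_fintype_card, Fintype.card_prod, Fintype.card_prod, Fintype.card_finset,
      Fintype.card_fun, Fintype.card_fun, Fintype.card_prod, Fintype.card_fin, Fintype.card_fin]
  rw [hcard]
  calc Nat.card ↥{G' : G.Subgraph | Nonempty (G'.coe ≃g H)} ≤ _ := hle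
    _ = _ := hT
    _ = 2 ^ Fintype.card W * (Fintype.card W * d) ^ Fintype.card W * Fintype.card V ^ α := by ring

lemma connected_induce_image (G : SimpleGraph V) (N : Set V) (s : Set ↥N)
    (h : ((G.induce N).induce s).Connected) : (G.induce (Subtype.val '' s)).Connected := by
  have e : ((G.induce N).induce s) ≃g (G.induce (Subtype.val '' s)) := by
    refine ⟨Equiv.Set.image Subtype.val s Subtype.val_injective, ?_⟩
    intro a b
    simp [Equiv.Set.image, Equiv.Set.imageOfInjOn]
  exact e.connected_iff.1 h

lemma connected_induce_singleton (G : SimpleGraph V) (x : V) : (G.induce {x}).Connected := by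
  haveI : Nonempty ↥({x} : Set V) := ⟨⟨x, rfl⟩⟩
  haveI : Subsingleton ↥({x} : Set V) := ⟨fun a b => Subtype.ext (a.2.trans b.2.symm)⟩
  exact ⟨fun u v => by rw [Subsingleton.elim u v]⟩

lemma hasMinor_induce (G : SimpleGraph V) (N : Set V) (Kg : SimpleGraph K)
    (h : HasMinor (G.induce N) Kg) : HasMinor G Kg := by
  obtain ⟨f, h1, h2, h3, h4⟩ := h
  refine ⟨fun k => Subtype.val '' f k, fun k => (h1 k).image _,
    fun k => connected_induce_image G N (f k) (h2 k), ?_, ?_⟩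
  · intro k1 k2 hk
    exact Set.disjoint_image_of_injective Subtype.val_injective (h3 k1 k2 hk)
  · intro k1 k2 hk
    obtain ⟨v1, hv1, v2, hv2, hadj⟩ := h4 k1 k2 hk
    exact ⟨v1.val, ⟨v1, hv1, rfl⟩, v2.val, ⟨v2, hv2, rfl⟩, hadj⟩


lemma hasMinor_contract (G : SimpleGraph V) (x y : V) (hxy : G.Adj x y) (Kg : SimpleGraph K)
    (h : HasMinor (contract G x y) Kg) : HasMinor G Kg := by
  obtain ⟨f, h1, h2, h3, h4⟩ := h
  have hxney : x ≠ y := G.ne_of_adj hxy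
  set xv : {z : V // z ≠ y} := ⟨x, hxney⟩ with hxv
  set B : K → Set V := fun k =>
    Subtype.val '' f k ∪ (if xv ∈ f k then {y} else ∅) with hB
  have hyB : ∀ k, xv ∈ f k → y ∈ B k := by
    intro k hk
    rw [hB]
    right
    rw [if_pos hk]
    rfl
  have hvalB : ∀ k (a : {z : V // z ≠ y}), a ∈ f k → a.val ∈ B k :=
    fun k a ha => Or.inl ⟨a, ha, rfl⟩
  refine ⟨B, ?_, ?_, ?_, ?_⟩
  · intro k
    obtain ⟨a, ha⟩ := h1 k
    exact ⟨a.val, hvalB k a ha⟩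
  · -- connectivity
    intro k
    haveI : Nonempty ↥(B k) := by
      obtain ⟨a, ha⟩ := h1 k
      exact ⟨⟨a.val, hvalB k a ha⟩⟩
    have key : ∀ (c1 c2 : ↥(f k)) (p : ((contract G x y).induce (f k)).Walk c1 c2),
        ∀ (hu : (c1 : {z : V // z ≠ y}).val ∈ B k) (hv : (c2 : {z : V // z ≠ y}).val ∈ B k),
          (G.induce (B k)).Reachable ⟨(c1 : {z : V // z ≠ y}).val, hu⟩
            ⟨(c2 : {z : V // z ≠ y}).val, hv⟩ := by
      intro c1 c2 p
      induction p with
      | nil => intro hu hv; rfl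
      | @cons u c3 c2 hadj p ih =>
        intro hu hv
        have h3mem : (c3 : {z : V // z ≠ y}).val ∈ B k := hvalB k c3 c3.2
        have step : (G.induce (B k)).Reachable ⟨(u : {z : V // z ≠ y}).val, hu⟩
            ⟨(c3 : {z : V // z ≠ y}).val, h3mem⟩ := by
          have hadj' : (contract G x y).Adj u.val c3.val := hadj
          rcases (hadj' : _ ≠ _ ∧ _).2 with hc | ⟨he1, he2⟩ | ⟨he1, he2⟩
          · exact (Adj.reachable (by exact hc :
              (G.induce (B k)).Adj ⟨(u : {z : V // z ≠ y}).val, hu⟩ ⟨(c3 : {z : V // z ≠ y}).val, h3mem⟩))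
          · -- u.val.val = x, G.Adj y c3.val.val
            have hux : (u : {z : V // z ≠ y}) = xv := Subtype.ext he1
            have hyBk : y ∈ B k := hyB k (hux ▸ u.2)
            have r1 : (G.induce (B k)).Adj ⟨(u : {z : V // z ≠ y}).val, hu⟩ ⟨y, hyBk⟩ := by
              have hh : G.Adj ((u : {z : V // z ≠ y}).val) y := by rw [he1]; exact hxy
              exact hh
            have r2 : (G.induce (B k)).Adj ⟨y, hyBk⟩ ⟨(c3 : {z : V // z ≠ y}).val, h3mem⟩ := he2
            exact (r1.reachable).trans r2.reachable
          · -- c3.val.val = x, G.Adj y u.val.val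
            have hux : (c3 : {z : V // z ≠ y}) = xv := Subtype.ext he1
            have hyBk : y ∈ B k := hyB k (hux ▸ c3.2)
            have r1 : (G.induce (B k)).Adj ⟨(u : {z : V // z ≠ y}).val, hu⟩ ⟨y, hyBk⟩ := he2.symm
            have r2 : (G.induce (B k)).Adj ⟨y, hyBk⟩ ⟨(c3 : {z : V // z ≠ y}).val, h3mem⟩ := by
              have hh : G.Adj y ((c3 : {z : V // z ≠ y}).val) := by rw [he1]; exact hxy.symm
              exact hh
            exact (r1.reachable).trans r2.reachable
        exact step.trans (ih h3mem hv)
    have reachval : ∀ (a b : {z : V // z ≠ y}) (ha : a ∈ f k) (hb : b ∈ f k),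
        (G.induce (B k)).Reachable ⟨a.val, hvalB k a ha⟩ ⟨b.val, hvalB k b hb⟩ := by
      intro a b ha hb
      obtain ⟨p⟩ := (h2 k).preconnected ⟨a, ha⟩ ⟨b, hb⟩
      exact key ⟨a, ha⟩ ⟨b, hb⟩ p _ _
    constructor
    intro u v
    -- reduce u and v to image elements
    have hmem : ∀ (w : ↥(B k)), ∃ (a : {z : V // z ≠ y}) (ha : a ∈ f k),
        (G.induce (B k)).Reachable w ⟨a.val, hvalB k a ha⟩ := by
      rintro ⟨w, hw⟩
      rcases hw with ⟨a, ha, rfl⟩ | hy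
      · exact ⟨a, ha, by rfl⟩
      · by_cases hxk : xv ∈ f k
        · rw [if_pos hxk] at hy
          cases hy
          refine ⟨xv, hxk, ?_⟩
          have : (G.induce (B k)).Adj ⟨y, hyB k hxk⟩ ⟨xv.val, hvalB k xv hxk⟩ := hxy.symm
          exact this.reachable
        · rw [if_neg hxk] at hy
          exact absurd hy (Set.notMem_empty _)
    obtain ⟨a, ha, ra⟩ := hmem u
    obtain ⟨b, hb, rb⟩ := hmem v
    exact (ra.trans (reachval a b ha hb)).trans rb.symm
  · -- disjointness
    intro k1 k2 hk
    have hd := h3 k1 k2 hk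
    rw [Set.disjoint_left]
    intro a ha1 ha2
    rcases ha1 with ⟨c, hc, rfl⟩ | hy1
    · rcases ha2 with ⟨c', hc', hcc⟩ | hy2
      · have : c = c' := Subtype.ext hcc.symm
        subst this
        exact (Set.disjoint_left.1 hd hc) hc'
      · by_cases hxk : xv ∈ f k2
        · rw [if_pos hxk] at hy2
          exact c.2 hy2
        · rw [if_neg hxk] at hy2
          exact absurd hy2 (Set.notMem_empty _)
    · by_cases hxk : xv ∈ f k1
      · rw [if_pos hxk] at hy1
        cases hy1
        rcases ha2 with ⟨c', hc', hcc⟩ | hy2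
        · exact c'.2 hcc
        · by_cases hxk2 : xv ∈ f k2
          · exact (Set.disjoint_left.1 hd hxk) hxk2
          · rw [if_neg hxk2] at hy2
            exact absurd hy2 (Set.notMem_empty _)
      · rw [if_neg hxk] at hy1
        exact absurd hy1 (Set.notMem_empty _)
  · -- adjacency
    intro k1 k2 hk
    obtain ⟨a, ha, b, hb, hadj⟩ := h4 k1 k2 hk
    rcases (hadj : _ ≠ _ ∧ _).2 with hc | ⟨he1, he2⟩ | ⟨he1, he2⟩
    · exact ⟨a.val, hvalB k1 a ha, b.val, hvalB k2 b hb, hc⟩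
    · have hax : a = xv := Subtype.ext he1
      exact ⟨y, hyB k1 (hax ▸ ha), b.val, hvalB k2 b hb, he2⟩
    · have hbx : b = xv := Subtype.ext he1
      exact ⟨a.val, hvalB k1 a ha, y, hyB k2 (hbx ▸ hb), he2.symm⟩

lemma minor_extend {k : ℕ} (G : SimpleGraph V) (x : V)
    (h : HasMinor (G.induce (G.neighborSet x)) (completeGraph (Fin k))) :
    HasMinor G (completeGraph (Fin (k + 1))) := by
  obtain ⟨f, h1, h2, h3, h4⟩ := h
  refine ⟨Fin.cases {x} (fun i => Subtype.val '' f i), ?_, ?_, ?_, ?_⟩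
  · refine Fin.cases ?_ ?_
    · simp only [Fin.cases_zero]
      exact ⟨x, rfl⟩
    · intro i
      simp only [Fin.cases_succ]
      exact (h1 i).image _
  · refine Fin.cases ?_ ?_
    · simp only [Fin.cases_zero]
      exact connected_induce_singleton G x
    · intro i
      simp only [Fin.cases_succ]
      exact connected_induce_image _ _ _ (h2 i)
  · refine Fin.cases ?_ ?_
    · refine Fin.cases ?_ ?_
      · intro hk; exact absurd rfl hk
      · intro j hk
        simp only [Fin.cases_zero, Fin.cases_succ]
        rw [Set.disjoint_left]
        rintro a ha ⟨c, hc, hcc⟩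
        have hc2 : (c : V) ∈ G.neighborSet x := c.2
        rw [hcc, ha] at hc2
        exact G.loopless.irrefl x hc2
    · intro i
      refine Fin.cases ?_ ?_
      · intro hk
        simp only [Fin.cases_zero, Fin.cases_succ]
        rw [Set.disjoint_right]
        rintro a ha ⟨c, hc, hcc⟩
        have hc2 : (c : V) ∈ G.neighborSet x := c.2
        rw [hcc, ha] at hc2
        exact G.loopless.irrefl x hc2
      · intro j hk
        simp only [Fin.cases_succ]
        refine Set.disjoint_image_of_injective Subtype.val_injective (h3 i j ?_)
        intro hij; exact hk (by rw [hij])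
  · refine Fin.cases ?_ ?_
    · refine Fin.cases ?_ ?_
      · intro hk; exact absurd rfl hk
      · intro j hk
        simp only [Fin.cases_zero, Fin.cases_succ]
        obtain ⟨a, ha⟩ := h1 j
        exact ⟨x, rfl, a.val, ⟨a, ha, rfl⟩, a.2⟩
    · intro i
      refine Fin.cases ?_ ?_
      · intro hk
        simp only [Fin.cases_zero, Fin.cases_succ]
        obtain ⟨a, ha⟩ := h1 i
        exact ⟨a.val, ⟨a, ha, rfl⟩, x, rfl, (a.2 : G.Adj x a.val).symm⟩
      · intro j hk
        simp only [Fin.cases_succ]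
        obtain ⟨v1, hv1, v2, hv2, hadj⟩ := h4 i j (fun hij => hk (by rw [hij]))
        exact ⟨v1.val, ⟨v1, hv1, rfl⟩, v2.val, ⟨v2, hv2, rfl⟩, hadj⟩

lemma m_contract [Fintype V] (G : SimpleGraph V) (x y : V) (hxy : G.Adj x y) :
    m G ≤ m (contract G x y) + 2 * (Finset.univ.filter fun z => G.Adj x z ∧ G.Adj y z).card + 2 := by
  classical
  have hxney : x ≠ y := G.ne_of_adj hxy
  set A := ((Finset.univ.filter fun p : V × V => G.Adj p.1 p.2).erase (x, y)).erase (y, x) with hA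
  have hmA : m G ≤ A.card + 2 := by
    have hm1 : ((x, y) : V × V) ∈ (Finset.univ.filter fun p : V × V => G.Adj p.1 p.2) := by
      simp [hxy]
    have hm2 : ((y, x) : V × V) ∈ (Finset.univ.filter fun p : V × V => G.Adj p.1 p.2).erase (x, y) := by
      rw [Finset.mem_erase]
      refine ⟨?_, by simp [hxy.symm]⟩
      intro hcon
      rw [Prod.ext_iff] at hcon
      exact hxney hcon.2
    have e1 := Finset.card_erase_add_one hm2
    have e2 := Finset.card_erase_add_one hm1
    rw [m, hA]
    omega
  set ρ : V → {z : V // z ≠ y} := fun v => if hv : v = y then ⟨x, hxney⟩ else ⟨v, hv⟩ with hρdef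
  have hρy : ρ y = ⟨x, hxney⟩ := by simp [hρdef]
  have hρn : ∀ (v : V) (hv : v ≠ y), ρ v = ⟨v, hv⟩ := by intro v hv; simp [hρdef, hv]
  have hρ : ∀ a c : V, ρ a = ρ c → a = c ∨ (a = y ∧ c = x) ∨ (a = x ∧ c = y) := by
    intro a c he
    by_cases ha : a = y <;> by_cases hc : c = y
    · left; rw [ha, hc]
    · rw [ha, hρy, hρn c hc] at he
      right; left
      exact ⟨ha, (Subtype.ext_iff.1 he).symm⟩
    · rw [hc, hρy, hρn a ha] at he
      right; right
      exact ⟨Subtype.ext_iff.1 he, hc⟩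
    · rw [hρn a ha, hρn c hc] at he
      left; exact Subtype.ext_iff.1 he
  set T := (Finset.univ.filter fun q : {z : V // z ≠ y} × {z : V // z ≠ y} =>
      (contract G x y).Adj q.1 q.2).disjSum
      ((Finset.univ.filter fun z => G.Adj x z ∧ G.Adj y z) ×ˢ (Finset.univ : Finset (Fin 2)))
      with hT
  set i : V × V → ({z : V // z ≠ y} × {z : V // z ≠ y}) ⊕ (V × Fin 2) := fun p =>
    if p.1 = y ∧ G.Adj x p.2 then Sum.inr (p.2, 0)
    else if p.2 = y ∧ G.Adj x p.1 then Sum.inr (p.1, 1)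
    else Sum.inl (ρ p.1, ρ p.2) with hi
  have hAT : A.card ≤ T.card := by
    apply Finset.card_le_card_of_injOn i
    · -- membership
      intro p hp
      simp only [hA, Finset.mem_coe, Finset.mem_erase, Finset.mem_filter, Finset.mem_univ, true_and] at hp
      obtain ⟨hne2, hne1, hadj⟩ := hp
      by_cases a1 : p.1 = y ∧ G.Adj x p.2
      · rw [hi]
        simp only [if_pos a1]
        apply Finset.inr_mem_disjSum.2
        rw [Finset.mem_product]
        refine ⟨?_, Finset.mem_univ _⟩
        simp only [Finset.mem_filter, Finset.mem_univ, true_and]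
        exact ⟨a1.2, by rw [← a1.1]; exact hadj⟩
      · by_cases a2 : p.2 = y ∧ G.Adj x p.1
        · rw [hi]
          simp only [if_neg a1, if_pos a2]
          apply Finset.inr_mem_disjSum.2
          rw [Finset.mem_product]
          refine ⟨?_, Finset.mem_univ _⟩
          simp only [Finset.mem_filter, Finset.mem_univ, true_and]
          refine ⟨a2.2, ?_⟩
          have := hadj.symm
          rw [a2.1] at this
          exact this
        · rw [hi]
          simp only [if_neg a1, if_neg a2]
          apply Finset.inl_mem_disjSum.2
          simp only [Finset.mem_filter, Finset.mem_univ, true_and]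
          by_cases hy1 : p.1 = y
          · have hy2 : p.2 ≠ y := by
              intro hy2
              rw [hy1, hy2] at hadj
              exact G.loopless.irrefl y hadj
            have hnadj : ¬ G.Adj x p.2 := fun hc => a1 ⟨hy1, hc⟩
            rw [hy1, hρy, hρn p.2 hy2]
            constructor
            · intro hcon
              injection hcon with h
              apply hne2
              rw [Prod.ext_iff]
              exact ⟨hy1, h.symm⟩
            · right; left
              refine ⟨rfl, ?_⟩
              have hgoal : G.Adj y p.2 := by rw [← hy1]; exact hadj
              exact hgoal
          · by_cases hy2 : p.2 = y
            · have hnadj : ¬ G.Adj x p.1 := fun hc => a2 ⟨hy2, hc⟩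
              rw [hy2, hρy, hρn p.1 hy1]
              constructor
              · intro hcon
                injection hcon with h
                apply hne1
                rw [Prod.ext_iff]
                exact ⟨h, hy2⟩
              · right; right
                refine ⟨rfl, ?_⟩
                have hgoal : G.Adj y p.1 := by rw [← hy2]; exact hadj.symm
                exact hgoal
            · rw [hρn p.1 hy1, hρn p.2 hy2]
              refine ⟨?_, Or.inl hadj⟩
              intro hcon
              injection hcon with h
              exact G.ne_of_adj hadj h
    · -- injectivity
      intro p hp q hq heq
      simp only [hA, Finset.coe_erase, Set.mem_diff, Finset.coe_filter, Set.mem_setOf_eq,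
        Finset.mem_coe, Finset.mem_erase, Finset.mem_filter, Finset.mem_univ, true_and,
        Set.mem_singleton_iff] at hp hq
      have hpne2 : p ≠ (y, x) := hp.2
      have hpne1 : p ≠ (x, y) := hp.1.2
      have hpadj : G.Adj p.1 p.2 := hp.1.1
      have hqne2 : q ≠ (y, x) := hq.2
      have hqne1 : q ≠ (x, y) := hq.1.2
      have hqadj : G.Adj q.1 q.2 := hq.1.1
      rw [hi] at heq
      by_cases a1 : p.1 = y ∧ G.Adj x p.2 <;> by_cases b1 : q.1 = y ∧ G.Adj x q.2
      · simp only [if_pos a1, if_pos b1, Sum.inr.injEq, Prod.mk.injEq] at heq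
        rw [Prod.ext_iff]
        exact ⟨a1.1.trans b1.1.symm, heq.1⟩
      · by_cases b2 : q.2 = y ∧ G.Adj x q.1
        · simp only [if_pos a1, if_neg b1, if_pos b2, Sum.inr.injEq, Prod.mk.injEq] at heq
          exact absurd heq.2 (by decide)
        · simp only [if_pos a1, if_neg b1, if_neg b2] at heq
          exact absurd heq (by simp)
      · by_cases a2 : p.2 = y ∧ G.Adj x p.1
        · simp only [if_neg a1, if_pos a2, if_pos b1, Sum.inr.injEq, Prod.mk.injEq] at heq
          exact absurd heq.2 (by decide)
        · simp only [if_neg a1, if_neg a2, if_pos b1] at heq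
          exact absurd heq (by simp)
      · by_cases a2 : p.2 = y ∧ G.Adj x p.1 <;> by_cases b2 : q.2 = y ∧ G.Adj x q.1
        · simp only [if_neg a1, if_pos a2, if_neg b1, if_pos b2, Sum.inr.injEq,
            Prod.mk.injEq] at heq
          rw [Prod.ext_iff]
          exact ⟨heq.1, a2.1.trans b2.1.symm⟩
        · simp only [if_neg a1, if_pos a2, if_neg b1, if_neg b2] at heq
          exact absurd heq (by simp)
        · simp only [if_neg a1, if_neg a2, if_neg b1, if_pos b2] at heq
          exact absurd heq (by simp)
        · simp only [if_neg a1, if_neg a2, if_neg b1, if_neg b2, Sum.inl.injEq,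
            Prod.mk.injEq] at heq
          obtain ⟨e1, e2⟩ := heq
          have hc1 : p.1 = q.1 := by
            rcases hρ _ _ e1 with h | ⟨hpy, hqx⟩ | ⟨hpx, hqy⟩
            · exact h
            · exfalso
              have hnadj : ¬ G.Adj x p.2 := fun hc => a1 ⟨hpy, hc⟩
              rcases hρ _ _ e2 with h' | ⟨hpy2, hqx2⟩ | ⟨hpx2, hqy2⟩
              · apply hnadj
                rw [h', ← hqx]
                exact hqadj
              · rw [hpy, hpy2] at hpadj
                exact G.loopless.irrefl y hpadj
              · exact hqne1 (by rw [Prod.ext_iff]; exact ⟨hqx, hqy2⟩)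
            · exfalso
              have hnadj : ¬ G.Adj x q.2 := fun hc => b1 ⟨hqy, hc⟩
              rcases hρ _ _ e2 with h' | ⟨hpy2, hqx2⟩ | ⟨hpx2, hqy2⟩
              · apply hnadj
                rw [← h', ← hpx]
                exact hpadj
              · exact hpne1 (by rw [Prod.ext_iff]; exact ⟨hpx, hpy2⟩)
              · rw [hqy, hqy2] at hqadj
                exact G.loopless.irrefl y hqadj
          have hc2 : p.2 = q.2 := by
            rcases hρ _ _ e2 with h | ⟨hpy, hqx⟩ | ⟨hpx, hqy⟩
            · exact h
            · exfalso
              have hnadj : ¬ G.Adj x p.1 := fun hc => a2 ⟨hpy, hc⟩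
              apply hnadj
              apply Adj.symm
              rw [← hc1] at hqadj
              rw [← hqx]
              exact hqadj
            · exfalso
              have hnadj : ¬ G.Adj x q.1 := fun hc => b2 ⟨hqy, hc⟩
              apply hnadj
              apply Adj.symm
              rw [hc1] at hpadj
              rw [← hpx]
              exact hpadj
          rw [Prod.ext_iff]
          exact ⟨hc1, hc2⟩
  have hTcard : T.card = m (contract G x y)
      + (Finset.univ.filter fun z => G.Adj x z ∧ G.Adj y z).card * 2 := by
    rw [hT, Finset.card_disjSum, Finset.card_product]
    simp [m]
  omega


lemma card_ne_subtype [Fintype V] (y : V) :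
    Fintype.card {z : V // z ≠ y} = Fintype.card V - 1 := by
  classical
  have h1 : Fintype.card {z : V // ¬ z = y} = Fintype.card V - Fintype.card {z : V // z = y} :=
    Fintype.card_subtype_compl _
  have h2 : Fintype.card {z : V // z = y} = 1 := Fintype.card_subtype_eq y
  have h3 : Fintype.card {z : V // z ≠ y} = Fintype.card {z : V // ¬ z = y} :=
    Fintype.card_congr (Equiv.subtypeEquivRight fun _ => Iff.rfl)
  omega

lemma card_set_ne [Fintype V] (y : V) :
    Fintype.card ↥{u : V | u ≠ y} = Fintype.card V - 1 := by
  classical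
  rw [← card_ne_subtype y]
  exact Fintype.card_congr (Equiv.subtypeEquivRight fun _ => Iff.rfl)

lemma mader (t : ℕ) : ∀ (n : ℕ) (V : Type) [Fintype V] (G : SimpleGraph V),
    Fintype.card V = n → Nonempty V → 2 ^ t * n ≤ m G →
    HasMinor G (completeGraph (Fin t)) := by
  induction t using Nat.strong_induction_on with
  | _ t IHt =>
  obtain _ | t' := t
  · -- t = 0
    intro n V _ G hcard hne hm
    exact ⟨fun i => i.elim0, fun w => w.elim0, fun w => w.elim0,
      fun w₁ => w₁.elim0, fun w₁ w₂ h => w₁.elim0⟩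
  intro n
  induction n using Nat.strong_induction_on with
  | _ n IHn =>
  intro V _ G hcard hne hm
  classical
  have hn1 : 1 ≤ n := by
    rw [← hcard]
    exact Fintype.card_pos
  have hpow : (2:ℕ) ^ (t' + 1) = 2 * 2 ^ t' := by rw [pow_succ]; ring
  have hApos : 0 < (2:ℕ) ^ t' := Nat.pow_pos (by norm_num)
  have hmpos : 0 < m G := by
    have : 2 ^ (t' + 1) * n > 0 := by positivity
    omega
  obtain ⟨p, hp⟩ := Finset.card_pos.1 hmpos
  have hpadj : G.Adj p.1 p.2 := by
    simpa using (Finset.mem_filter.1 hp).2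
  have hn2 : 2 ≤ n := by
    rw [← hcard]
    exact Fintype.one_lt_card_iff_nontrivial.2 ⟨⟨p.1, p.2, G.ne_of_adj hpadj⟩⟩
  by_cases ha : ∃ v, (Finset.univ.filter fun u => G.Adj v u).card ≤ 2 ^ t'
  · -- delete a low degree vertex
    obtain ⟨v, hv⟩ := ha
    have hdel := m_delete G v
    have hcard' : Fintype.card ↥{u : V | u ≠ v} = n - 1 := by rw [card_set_ne, hcard]
    haveI hne' : Nonempty ↥{u : V | u ≠ v} := by
      rw [← Fintype.card_pos_iff, hcard']
      omega
    have hm' : 2 ^ (t' + 1) * (n - 1) ≤ m (G.induce {u : V | u ≠ v}) := by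
      have key : 2 ^ (t' + 1) * (n - 1) + 2 ^ (t' + 1)
          ≤ m (G.induce {u : V | u ≠ v}) + 2 ^ (t' + 1) := by
        calc 2 ^ (t' + 1) * (n - 1) + 2 ^ (t' + 1) = 2 ^ (t' + 1) * n := by
              rw [← Nat.mul_succ]
              congr 1
              omega
          _ ≤ m G := hm
          _ = m (G.induce {u : V | u ≠ v})
              + 2 * (Finset.univ.filter fun u => G.Adj v u).card := hdel
          _ ≤ m (G.induce {u : V | u ≠ v}) + 2 ^ (t' + 1) := by
              have h2 : 2 * (Finset.univ.filter fun u => G.Adj v u).card ≤ 2 ^ (t' + 1) := by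
                rw [hpow]; omega
              omega
      omega
    exact hasMinor_induce G _ _
      (IHn (n - 1) (by omega) ↥{u : V | u ≠ v} (G.induce {u : V | u ≠ v}) hcard' hne' hm')
  · push_neg at ha
    by_cases hb : ∃ q : V × V, G.Adj q.1 q.2 ∧
        (Finset.univ.filter fun z => G.Adj q.1 z ∧ G.Adj q.2 z).card < 2 ^ t'
    · -- contract an edge with few common neighbours
      obtain ⟨⟨x, y⟩, hxy, hcom⟩ := hb
      have hcom2 : (Finset.univ.filter fun z => G.Adj x z ∧ G.Adj y z).card < 2 ^ t' := hcom
      have hcon := m_contract G x y hxy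
      have hcard' : Fintype.card {z : V // z ≠ y} = n - 1 := by rw [card_ne_subtype, hcard]
      haveI hne' : Nonempty {z : V // z ≠ y} := by
        rw [← Fintype.card_pos_iff, hcard']
        omega
      have hm' : 2 ^ (t' + 1) * (n - 1) ≤ m (contract G x y) := by
        have key : 2 ^ (t' + 1) * (n - 1) + 2 ^ (t' + 1)
            ≤ m (contract G x y) + 2 ^ (t' + 1) := by
          calc 2 ^ (t' + 1) * (n - 1) + 2 ^ (t' + 1) = 2 ^ (t' + 1) * n := by
                rw [← Nat.mul_succ]
                congr 1
                omega
            _ ≤ m G := hm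
            _ ≤ m (contract G x y)
                + 2 * (Finset.univ.filter fun z => G.Adj x z ∧ G.Adj y z).card + 2 := hcon
            _ ≤ m (contract G x y) + 2 ^ (t' + 1) := by
                have h2 : 2 * (Finset.univ.filter fun z => G.Adj x z ∧ G.Adj y z).card + 2
                    ≤ 2 ^ (t' + 1) := by
                  rw [hpow]; omega
                omega
        omega
      exact hasMinor_contract G x y hxy _
        (IHn (n - 1) (by omega) {z : V // z ≠ y} (contract G x y) hcard' hne' hm')
    · -- every edge is in many triangles: recurse into a neighbourhood
      push_neg at hb
      obtain ⟨x⟩ := hne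
      have hdegx : 2 ^ t' < (Finset.univ.filter fun u => G.Adj x u).card := ha x
      obtain ⟨u0, hu0⟩ := Finset.card_pos.1 (lt_of_le_of_lt (Nat.zero_le _) hdegx)
      have hu0adj : G.Adj x u0 := by simpa using (Finset.mem_filter.1 hu0).2
      haveI hNne : Nonempty ↥(G.neighborSet x) := ⟨⟨u0, hu0adj⟩⟩
      have hdegN : ∀ z : ↥(G.neighborSet x),
          2 ^ t' ≤ (Finset.univ.filter fun u : ↥(G.neighborSet x) =>
            (G.induce (G.neighborSet x)).Adj z u).card := by
        intro z
        have hzadj : G.Adj x z.val := z.2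
        have hbz := hb (x, z.val) hzadj
        have hbij : (Finset.univ.filter fun u : ↥(G.neighborSet x) =>
            (G.induce (G.neighborSet x)).Adj z u).card
            = (Finset.univ.filter fun u : V => G.Adj x u ∧ G.Adj z.val u).card := by
          refine Finset.card_bij (fun u _ => u.val) ?_ ?_ ?_
          · rintro ⟨u, hu⟩ hmem
            simp only [Finset.mem_filter, Finset.mem_univ, true_and] at hmem ⊢
            exact ⟨hu, hmem⟩
          · rintro ⟨u, hu⟩ _ ⟨u', hu'⟩ _ h
            exact Subtype.ext h
          · intro u hu
            simp only [Finset.mem_filter, Finset.mem_univ, true_and] at hu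
            refine ⟨⟨u, hu.1⟩, ?_, rfl⟩
            simp only [Finset.mem_filter, Finset.mem_univ, true_and]
            exact hu.2
        rw [hbij]
        exact hbz
      have hmN : 2 ^ t' * Fintype.card ↥(G.neighborSet x) ≤ m (G.induce (G.neighborSet x)) := by
        rw [m_eq_sum]
        calc 2 ^ t' * Fintype.card ↥(G.neighborSet x)
            = ∑ _z : ↥(G.neighborSet x), 2 ^ t' := by
              rw [Finset.sum_const, Finset.card_univ]
              ring
          _ ≤ _ := Finset.sum_le_sum fun z _ => hdegN z
      have hminor := IHt t' (by omega) (Fintype.card ↥(G.neighborSet x))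
        ↥(G.neighborSet x) (G.induce (G.neighborSet x)) rfl hNne hmN
      exact minor_extend G x hminor

lemma planar_min_deg [Fintype V] (G : SimpleGraph V)
    (hp : ¬ HasMinor G (completeGraph (Fin 5))) :
    ∀ s : Finset V, s.Nonempty → ∃ v ∈ s, (s.filter fun u => G.Adj v u).card ≤ 32 := by
  classical
  intro s hs
  by_contra hcon
  push_neg at hcon
  apply hp
  apply hasMinor_induce G (↑s : Set V)
  apply mader 5 (Fintype.card ↥(↑s : Set V)) _ _ rfl
  · obtain ⟨v, hv⟩ := hs
    exact ⟨⟨v, hv⟩⟩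
  · rw [m_eq_sum]
    have hdegz : ∀ z : ↥(↑s : Set V),
        32 ≤ (Finset.univ.filter fun u : ↥(↑s : Set V) =>
          (G.induce (↑s : Set V)).Adj z u).card := by
      intro z
      have hz : (z : V) ∈ s := z.2
      have hbij : (Finset.univ.filter fun u : ↥(↑s : Set V) =>
          (G.induce (↑s : Set V)).Adj z u).card
          = (s.filter fun u => G.Adj (z : V) u).card := by
        refine Finset.card_bij (fun u _ => u.val) ?_ ?_ ?_
        · rintro ⟨u, hu⟩ hmem
          simp only [Finset.mem_filter, Finset.mem_univ, true_and] at hmem ⊢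
          exact ⟨hu, hmem⟩
        · rintro ⟨u, hu⟩ _ ⟨u', hu'⟩ _ h
          exact Subtype.ext h
        · intro u hu
          simp only [Finset.mem_filter] at hu
          refine ⟨⟨u, hu.1⟩, ?_, rfl⟩
          simp only [Finset.mem_filter, Finset.mem_univ, true_and]
          exact hu.2
      rw [hbij]
      have := hcon (z : V) hz
      omega
    calc (2:ℕ) ^ 5 * Fintype.card ↥(↑s : Set V)
        = ∑ _z : ↥(↑s : Set V), 32 := by
          rw [Finset.sum_const, Finset.card_univ]
          ring
      _ ≤ _ := Finset.sum_le_sum fun z _ => hdegz z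

end StmtAux

/-- For every graph `H` there is a constant `C` such that every planar graph on
`n` vertices contains at most `C·n^α(H)` copies of `H`. -/
theorem stmt6 {W : Type} [Fintype W] (H : SimpleGraph W) :
    ∃ C : ℕ, ∀ (V : Type) [Fintype V] (G : SimpleGraph V), IsPlanar G →
      _root_.copyCount H G ≤ C * Fintype.card V ^ _root_.indepNum H := by
  classical
  refine ⟨2 ^ Fintype.card W * (Fintype.card W * 32) ^ Fintype.card W + 1, ?_⟩
  intro V _ G hplanar
  by_cases hW : Nonempty W
  · by_cases hV : Nonempty V
    · -- main case
      have hd := StmtAux.planar_min_deg G hplanar.1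
      obtain ⟨r, hr, hdeg⟩ := StmtAux.exists_rank G 32 hd
      have hmain := StmtAux.card_copies_le G H 32 (by norm_num) r hr hdeg
      calc _root_.copyCount H G
          ≤ (2 ^ Fintype.card W * (Fintype.card W * 32) ^ Fintype.card W)
            * Fintype.card V ^ _root_.indepNum H := hmain
        _ ≤ (2 ^ Fintype.card W * (Fintype.card W * 32) ^ Fintype.card W + 1)
            * Fintype.card V ^ _root_.indepNum H := by
            apply Nat.mul_le_mul_right
            omega
    · -- V empty
      haveI : IsEmpty V := not_nonempty_iff.1 hV
      have hempty : {G' : G.Subgraph | Nonempty (G'.coe ≃g H)} = ∅ := by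
        ext G'
        simp only [Set.mem_setOf_eq, Set.mem_empty_iff_false, iff_false]
        rintro ⟨e⟩
        obtain ⟨w⟩ := hW
        exact isEmptyElim (((e.symm w) : ↥G'.verts) : V)
      rw [_root_.copyCount, hempty, Set.ncard_empty]
      exact Nat.zero_le _
  · -- W empty
    haveI : IsEmpty W := not_nonempty_iff.1 hW
    have hα : _root_.indepNum H = 0 := by
      have hset : {n | ∃ s : Finset W, _root_.IsIndepSet H (↑s : Set W) ∧ s.card = n} = {0} := by
        ext n
        constructor
        · rintro ⟨s, _, rfl⟩
          have : s.card ≤ Fintype.card W := Finset.card_le_univ s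
          simp only [Set.mem_singleton_iff]
          have hw0 : Fintype.card W = 0 := Fintype.card_eq_zero
          omega
        · rintro rfl
          exact ⟨∅, by simp [_root_.IsIndepSet], rfl⟩
      rw [_root_.indepNum, hset, csSup_singleton]
    rw [hα, pow_zero, mul_one]
    have hsub : ∀ G1 ∈ {G' : G.Subgraph | Nonempty (G'.coe ≃g H)},
        ∀ G2 ∈ {G' : G.Subgraph | Nonempty (G'.coe ≃g H)}, G1 = G2 := by
      intro G1 h1 G2 h2
      obtain ⟨e1⟩ := h1
      obtain ⟨e2⟩ := h2
      have hv1 : G1.verts = ∅ := by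
        ext v
        simp only [Set.mem_empty_iff_false, iff_false]
        intro hv
        exact isEmptyElim (e1 ⟨v, hv⟩)
      have hv2 : G2.verts = ∅ := by
        ext v
        simp only [Set.mem_empty_iff_false, iff_false]
        intro hv
        exact isEmptyElim (e2 ⟨v, hv⟩)
      ext a b
      · rw [hv1, hv2]
      · constructor
        · intro hadj
          exfalso
          have := hadj.fst_mem
          rw [hv1] at this
          exact this
        · intro hadj
          exfalso
          have := hadj.fst_mem
          rw [hv2] at this
          exact this
    rcases Set.eq_empty_or_nonempty {G' : G.Subgraph | Nonempty (G'.coe ≃g H)} with he | ⟨a, ha⟩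
    · rw [_root_.copyCount, he, Set.ncard_empty]
      exact Nat.zero_le _
    · have hsingle : {G' : G.Subgraph | Nonempty (G'.coe ≃g H)} = {a} :=
        Set.eq_singleton_iff_unique_mem.2 ⟨ha, fun b hb => hsub b hb a ha⟩
      rw [_root_.copyCount, hsingle, Set.ncard_singleton]
      exact Nat.one_le_iff_ne_zero.2 (by positivity)
end

section
/- For every ℓ ≥ 1 and every k with 1 ≤ k ≤ ℓ there exists a constant D = D(ℓ) such that in any graph G containing no even cycle of length at most 2ℓ, for any two vertices u, v the number of paths of length k from u to v is at most D. -/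
open SimpleGraph

namespace LVAux

open SimpleGraph Walk

variable {V : Type} {G : SimpleGraph V}

lemma support_getElem {u v : V} (p : G.Walk u v) (i : ℕ) (h : i < p.support.length) :
    p.support[i] = p.getVert i := by
  induction p generalizing i with
  | nil =>
    simp only [Walk.support_nil, List.length_singleton] at h
    interval_cases i
    simp
  | cons hadj q ih =>
    cases i with
    | zero => simp
    | succ n =>
      simp only [Walk.support_cons] at h ⊢
      simpa [Walk.getVert_cons_succ] using ih n (by simpa using Nat.lt_of_succ_lt_succ h)

lemma IsPath.getVert_inj {u v : V} {p : G.Walk u v} (hp : p.IsPath) {i j : ℕ}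
    (hi : i ≤ p.length) (hj : j ≤ p.length) (h : p.getVert i = p.getVert j) : i = j := by
  have hl := p.length_support
  have hi' : i < p.support.length := by omega
  have hj' : j < p.support.length := by omega
  have := (hp.support_nodup.getElem_inj_iff (hi := hi') (hj := hj'))
  rw [support_getElem p i hi', support_getElem p j hj'] at this
  exact this.mp h

lemma getVert_append_right {u v w : V} (q : G.Walk u w) (r : G.Walk w v) (i : ℕ) :
    (q.append r).getVert (q.length + i) = r.getVert i := by
  rw [Walk.getVert_append]
  simp

section TakeUntil
variable [DecidableEq V]

lemma getVert_dropUntil {u v w : V} (p : G.Walk u v) (hw : w ∈ p.support) (i : ℕ) :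
    (p.dropUntil w hw).getVert i = p.getVert ((p.takeUntil w hw).length + i) := by
  have h2 := getVert_append_right (p.takeUntil w hw) (p.dropUntil w hw) i
  rw [p.take_spec hw] at h2
  exact h2.symm

lemma length_dropUntil {u v w : V} (p : G.Walk u v) (hw : w ∈ p.support) :
    (p.dropUntil w hw).length = p.length - (p.takeUntil w hw).length := by
  have h2 := congrArg Walk.length (p.take_spec hw)
  rw [Walk.length_append] at h2
  omega

lemma getVert_length_takeUntil {u v w : V} (p : G.Walk u v) (hw : w ∈ p.support) :
    p.getVert (p.takeUntil w hw).length = w := by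
  have h2 := getVert_append_right (p.takeUntil w hw) (p.dropUntil w hw) 0
  rw [p.take_spec hw] at h2
  simpa using h2

lemma length_takeUntil {u v w : V} {p : G.Walk u v} (hp : p.IsPath) (hw : w ∈ p.support)
    {j : ℕ} (hj : p.getVert j = w) (hjle : j ≤ p.length) : (p.takeUntil w hw).length = j :=
  IsPath.getVert_inj hp (p.length_takeUntil_le hw) hjle
    (by rw [getVert_length_takeUntil, hj])

end TakeUntil

lemma start_ne_end {x y : V} {p : G.Walk x y} (hp : p.IsPath) (hl : 1 ≤ p.length) : x ≠ y := by
  rintro rfl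
  rw [Walk.isPath_iff_eq_nil] at hp
  subst hp
  simp at hl

lemma edge_start_end_not_mem {x y : V} {p : G.Walk x y} (hp : p.IsPath) (hl : 2 ≤ p.length) :
    s(x, y) ∉ p.edges := by
  intro hmem
  cases p with
  | nil => simp at hmem
  | @cons _ b _ hadj q =>
    rw [Walk.edges_cons, List.mem_cons] at hmem
    have hnodup := hp.support_nodup
    rw [Walk.support_cons, List.nodup_cons] at hnodup
    rcases hmem with h | h
    · rw [Sym2.eq, Sym2.rel_iff'] at h
      rcases h with h | h
      · have hb : b = y := (Prod.ext_iff.mp h).2.symm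
        subst hb
        have hq : q.IsPath := hp.of_cons
        rw [Walk.isPath_iff_eq_nil] at hq
        subst hq
        simp at hl
      · have hx : x = y := (Prod.ext_iff.mp h).2.symm
        exact hnodup.1 (hx ▸ q.end_mem_support)
    · exact hnodup.1 (Walk.fst_mem_support_of_mem_edges q h)

lemma cycle_of_two_paths {x y : V} {P Q : G.Walk x y} (hP : P.IsPath) (hQ : Q.IsPath)
    (hl2 : 2 ≤ P.length) (hlen : P.length = Q.length) (hne : P ≠ Q)
    (hdisj : ∀ a, a ∈ P.support → a ∈ Q.support → a = x ∨ a = y) :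
    (P.append Q.reverse).IsCycle ∧ (P.append Q.reverse).length = 2 * P.length := by
  have hxy : x ≠ y := start_ne_end hP (by omega)
  have hlenapp : (P.append Q.reverse).length = 2 * P.length := by
    rw [Walk.length_append, Walk.length_reverse]; omega
  refine ⟨(Walk.isCycle_def _).mpr ⟨?_, ?_, ?_⟩, hlenapp⟩
  · rw [Walk.isTrail_def, Walk.edges_append]
    refine List.Nodup.append hP.isTrail.edges_nodup hQ.reverse.isTrail.edges_nodup ?_
    intro e heP heR
    rw [Walk.edges_reverse, List.mem_reverse] at heR
    induction e with
    | h a b =>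
      have haP := Walk.fst_mem_support_of_mem_edges P heP
      have hbP := Walk.snd_mem_support_of_mem_edges P heP
      have haQ := Walk.fst_mem_support_of_mem_edges Q heR
      have hbQ := Walk.snd_mem_support_of_mem_edges Q heR
      have hab : a ≠ b := by
        have : G.Adj a b := Walk.adj_of_mem_edges P heP
        exact this.ne
      have ha := hdisj a haP haQ
      have hb := hdisj b hbP hbQ
      have : s(a, b) = s(x, y) := by
        rcases ha with rfl | rfl <;> rcases hb with rfl | rfl
        · exact absurd rfl hab
        · rfl
        · exact Sym2.eq_swap
        · exact absurd rfl hab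
      rw [this] at heP
      exact edge_start_end_not_mem hP hl2 heP
  · intro h
    have := congrArg Walk.length h
    rw [hlenapp] at this
    simp only [Walk.length_nil] at this
    omega
  · rw [Walk.support_append, List.tail_append_of_ne_nil (Walk.support_ne_nil _)]
    have hPx : x ∉ P.support.tail := by
      have := hP.support_nodup
      rw [P.support_eq_cons, List.nodup_cons] at this
      exact this.1
    have hRy : y ∉ Q.reverse.support.tail := by
      have := hQ.reverse.support_nodup
      rw [Q.reverse.support_eq_cons, List.nodup_cons] at this
      exact this.1
    refine List.Nodup.append (hP.support_nodup.tail) (hQ.reverse.support_nodup.tail) ?_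
    intro a haP haR
    have haP' : a ∈ P.support := List.mem_of_mem_tail haP
    have haQ' : a ∈ Q.support := by
      have : a ∈ Q.reverse.support := List.mem_of_mem_tail haR
      rwa [Walk.support_reverse, List.mem_reverse] at this
    rcases hdisj a haP' haQ' with rfl | rfl
    · exact hPx haP
    · exact hRy haR

lemma cycle_getVert_inj {x : V} {c : G.Walk x x} (hc : c.IsCycle) {i j : ℕ}
    (hi : i < c.length) (hj : j < c.length) (h : c.getVert i = c.getVert j) : i = j := by
  have hn3 := hc.three_le_length
  have hsl := c.length_support
  have htl : c.support.tail.length = c.length := by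
    simp [List.length_tail, hsl]
  have hnd := hc.support_nodup
  have hget : ∀ t : ℕ, (ht : t < c.length) → c.support.tail[t]'(by omega) = c.getVert (t + 1) := by
    intro t ht
    rw [List.getElem_tail]
    exact support_getElem c (t+1) (by omega)
  have hlastx : c.support.tail[c.length - 1]'(by omega) = x := by
    rw [hget _ (by omega)]
    have : c.length - 1 + 1 = c.length := by omega
    rw [this, Walk.getVert_length]
  rcases Nat.eq_zero_or_pos i with rfl | hi1 <;> rcases Nat.eq_zero_or_pos j with rfl | hj1
  · rfl
  · exfalso
    rw [Walk.getVert_zero] at h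
    have h1 : c.support.tail[j - 1]'(by omega) = c.support.tail[c.length - 1]'(by omega) := by
      rw [hget _ (by omega), hlastx]
      have : j - 1 + 1 = j := by omega
      rw [this, ← h]
    have := (hnd.getElem_inj_iff).mp h1
    omega
  · exfalso
    rw [Walk.getVert_zero] at h
    have h1 : c.support.tail[i - 1]'(by omega) = c.support.tail[c.length - 1]'(by omega) := by
      rw [hget _ (by omega), hlastx]
      have : i - 1 + 1 = i := by omega
      rw [this, h]
    have := (hnd.getElem_inj_iff).mp h1
    omega
  · have h1 : c.support.tail[i - 1]'(by omega) = c.support.tail[j - 1]'(by omega) := by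
      rw [hget _ (by omega), hget _ (by omega)]
      have hi2 : i - 1 + 1 = i := by omega
      have hj2 : j - 1 + 1 = j := by omega
      rw [hi2, hj2, h]
    have := (hnd.getElem_inj_iff).mp h1
    omega

lemma false_of_cycle_of_noCopy {n : ℕ} (hG : ContainsNoCopy (cycleGraph n) G)
    {x : V} (c : G.Walk x x) (hc : c.IsCycle) (hl : c.length = n) : False := by
  subst hl
  have hn3 : 3 ≤ c.length := hc.three_le_length
  haveI : NeZero c.length := ⟨by omega⟩
  set n := c.length with hn
  set e : Fin n → V := fun i => c.getVert i with he
  have einj : Function.Injective e := by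
    intro i j hij
    exact Fin.ext (cycle_getVert_inj hc i.isLt j.isLt hij)
  have hval1 : (1 : Fin n).val = 1 := by
    rw [Fin.val_one']
    exact Nat.mod_eq_of_lt (by omega)
  have ewrap : ∀ i : Fin n, c.getVert (i.val + 1) = e (i + 1) := by
    intro i
    rw [he]
    simp only
    have hv : (i + 1).val = (i.val + 1) % n := by
      rw [Fin.add_def, hval1]
    by_cases h : i.val + 1 < n
    · rw [hv, Nat.mod_eq_of_lt h]
    · have hi : i.val + 1 = n := by have := i.isLt; omega
      have h0 : (i + 1).val = 0 := by rw [hv, hi, Nat.mod_self]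
      rw [h0, Walk.getVert_zero, hi, hn, Walk.getVert_length]
  have emem : ∀ i : Fin n, e i ∈ c.toSubgraph.verts := by
    intro i
    rw [Walk.verts_toSubgraph]
    exact Walk.mem_support_iff_exists_getVert.mpr ⟨i.val, rfl, le_of_lt i.isLt⟩
  have adj_iff : ∀ a b : V, c.toSubgraph.Adj a b ↔ ∃ i : Fin n, s(e i, e (i + 1)) = s(a, b) := by
    intro a b
    rw [Walk.toSubgraph_adj_iff]
    constructor
    · rintro ⟨t, hts, htl⟩
      exact ⟨⟨t, htl⟩, by rw [← ewrap ⟨t, htl⟩]; exact hts⟩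
    · rintro ⟨i, hi⟩
      refine ⟨i.val, ?_, i.isLt⟩
      rw [← ewrap i] at hi
      exact hi
  have key : ∀ i j : Fin n, c.toSubgraph.Adj (e i) (e j) ↔ (cycleGraph n).Adj i j := by
    intro i j
    rw [adj_iff, cycleGraph_adj']
    constructor
    · rintro ⟨t, ht⟩
      rw [Sym2.eq, Sym2.rel_iff'] at ht
      have hij : j = i + 1 ∨ i = j + 1 := by
        rcases ht with h | h
        · obtain ⟨h1, h2⟩ := Prod.ext_iff.mp h
          left
          rw [← einj h1, ← einj h2]
        · obtain ⟨h1, h2⟩ := Prod.ext_iff.mp h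
          simp only [Prod.fst_swap, Prod.snd_swap] at h1 h2
          right
          rw [← einj h1, ← einj h2]
      rcases hij with rfl | rfl
      · right
        rw [add_sub_cancel_left, hval1]
      · left
        rw [add_sub_cancel_left, hval1]
    · intro h
      have hij : i = j + 1 ∨ j = i + 1 := by
        rcases h with h | h
        · left
          have : i - j = 1 := Fin.ext (by rw [h, hval1])
          rw [sub_eq_iff_eq_add] at this
          rw [this, add_comm]
        · right
          have : j - i = 1 := Fin.ext (by rw [h, hval1])
          rw [sub_eq_iff_eq_add] at this
          rw [this, add_comm]
      rcases hij with rfl | rfl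
      · exact ⟨j, Sym2.eq_swap⟩
      · exact ⟨i, rfl⟩
  have esurj : ∀ a : c.toSubgraph.verts, ∃ i : Fin n, e i = a.val := by
    rintro ⟨a, ha⟩
    rw [Walk.verts_toSubgraph] at ha
    obtain ⟨t, hta, htl⟩ := Walk.mem_support_iff_exists_getVert.mp ha
    rcases lt_or_eq_of_le htl with h | h
    · exact ⟨⟨t, h⟩, hta⟩
    · refine ⟨⟨0, by omega⟩, ?_⟩
      show c.getVert 0 = a
      rw [Walk.getVert_zero, ← hta, h]
      exact (Walk.getVert_length c).symm
  let φ : Fin n ≃ c.toSubgraph.verts :=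
    Equiv.ofBijective (fun i => ⟨e i, emem i⟩)
      ⟨fun i j hij => einj (Subtype.ext_iff.mp hij),
       fun a => by obtain ⟨i, hi⟩ := esurj a; exact ⟨i, Subtype.ext hi⟩⟩
  have iso : cycleGraph n ≃g c.toSubgraph.coe :=
    { toEquiv := φ
      map_rel_iff' := by
        intro i j
        rw [Subgraph.coe_adj]
        exact key i j }
  exact hG c.toSubgraph ⟨iso.symm⟩

lemma exists_shared_internal {u v : V} {P Q : G.Walk u v} (hP : P.IsPath) (hQ : Q.IsPath)
    (hk2 : 2 ≤ P.length) (hlen : P.length = Q.length) (hne : P ≠ Q)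
    (hNC : ∀ (x : V) (c : G.Walk x x), c.IsCycle → c.length ≠ 2 * P.length) :
    ∃ i j, 1 ≤ i ∧ i ≤ P.length - 1 ∧ 1 ≤ j ∧ j ≤ P.length - 1 ∧
      P.getVert i = Q.getVert j := by
  by_contra hcon
  push_neg at hcon
  have hdisj : ∀ a, a ∈ P.support → a ∈ Q.support → a = u ∨ a = v := by
    intro a haP haQ
    obtain ⟨i, hia, hil⟩ := Walk.mem_support_iff_exists_getVert.mp haP
    obtain ⟨j, hja, hjl⟩ := Walk.mem_support_iff_exists_getVert.mp haQ
    rcases Nat.eq_zero_or_pos i with rfl | hi1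
    · left; rw [← hia, Walk.getVert_zero]
    rcases eq_or_lt_of_le hil with rfl | hik
    · right; rw [← hia, Walk.getVert_length]
    rcases Nat.eq_zero_or_pos j with rfl | hj1
    · left; rw [← hja, Walk.getVert_zero]
    rcases eq_or_lt_of_le hjl with rfl | hjk
    · right; rw [← hja, Walk.getVert_length]
    exfalso
    exact hcon i j hi1 (by omega) hj1 (by omega) (by rw [hia, hja])
  obtain ⟨hcyc, hclen⟩ := cycle_of_two_paths hP hQ hk2 hlen hne hdisj
  exact hNC u _ hcyc hclen

lemma length_one_subsingleton {u v : V} {p q : G.Walk u v}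
    (hp : p.length = 1) (hq : q.length = 1) : p = q := by
  have hform : ∀ r : G.Walk u v, r.length = 1 → ∀ (h : G.Adj u v),
      r = Walk.cons h Walk.nil := by
    intro r hr h
    cases r with
    | nil => simp at hr
    | @cons _ b _ hadj r' =>
      have h0 : r'.length = 0 := by simpa using hr
      have hb : b = v := Walk.eq_of_length_eq_zero h0
      subst hb
      have : r' = Walk.nil := by
        cases r' with
        | nil => rfl
        | cons _ _ => simp at h0
      subst this
      rfl
  have hadj : G.Adj u v := Walk.adj_of_length_eq_one hp
  rw [hform p hp hadj, hform q hq hadj]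

/-- The recursive bound. -/
def f : ℕ → ℕ
  | 0 => 1
  | n + 1 => 1 + (n + 2) * (n + 2) * f n * f n

lemma f_pos : ∀ n, 1 ≤ f n
  | 0 => le_refl _
  | n + 1 => by rw [f]; omega

lemma f_mono : Monotone f := by
  apply monotone_nat_of_le_succ
  intro n
  have h1 := f_pos n
  calc f n = 1 * f n := (one_mul _).symm
    _ ≤ ((n + 2) * (n + 2) * f n) * f n := by
        refine Nat.mul_le_mul_right _ ?_
        have h2 : 0 < (n + 2) * (n + 2) * f n :=
          Nat.mul_pos (Nat.mul_pos (by omega) (by omega)) (by omega)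
        omega
    _ ≤ 1 + (n + 2) * (n + 2) * f n * f n := by omega
    _ = f (n + 1) := by rw [f]

lemma ncard_biUnion_le {α β : Type*} (t : Finset α) (g : α → Set β) :
    (⋃ i ∈ t, g i).ncard ≤ ∑ i ∈ t, (g i).ncard := by
  classical
  induction t using Finset.induction with
  | empty => simp
  | @insert a s ha ih =>
    rw [Finset.set_biUnion_insert, Finset.sum_insert ha]
    exact le_trans (Set.ncard_union_le _ _) (Nat.add_le_add le_rfl ih)

lemma ncard_prod {α β : Type*} (A : Set α) (B : Set β) :
    (A ×ˢ B).ncard = A.ncard * B.ncard := by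
  rw [← Nat.card_coe_set_eq, ← Nat.card_coe_set_eq, ← Nat.card_coe_set_eq,
    ← Nat.card_prod]
  exact Nat.card_congr (Equiv.Set.prod A B)

lemma main_count (ℓ : ℕ)
    (hNC : ∀ m, 2 ≤ m → m ≤ ℓ → ∀ (x : V) (c : G.Walk x x), c.IsCycle → c.length ≠ 2 * m) :
    ∀ k, 1 ≤ k → k ≤ ℓ → ∀ u v : V,
      {p : G.Walk u v | p.IsPath ∧ p.length = k}.Finite ∧
      {p : G.Walk u v | p.IsPath ∧ p.length = k}.ncard ≤ f (k - 1) := by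
  classical
  intro k
  induction k using Nat.strong_induction_on with
  | _ k ih =>
    intro hk1 hkl u v
    set S := {p : G.Walk u v | p.IsPath ∧ p.length = k} with hS
    rcases eq_or_lt_of_le hk1 with hk1' | hk2
    · -- k = 1
      have hsub : S.Subsingleton := by
        intro p hp q hq
        exact length_one_subsingleton (by rw [hp.2, ← hk1']) (by rw [hq.2, ← hk1'])
      have hfin : S.Finite := hsub.finite
      refine ⟨hfin, le_trans ((Set.ncard_le_one_iff hfin).mpr (fun ha hb => hsub ha hb)) ?_⟩
      exact f_pos _
    · -- 2 ≤ k
      rcases S.eq_empty_or_nonempty with hSe | ⟨P₀, hP₀⟩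
      · rw [hSe]
        simp [Set.ncard_empty]
      · have hP₀path : P₀.IsPath := hP₀.1
        have hP₀len : P₀.length = k := hP₀.2
        set box : Finset (ℕ × ℕ) := Finset.Icc 1 (k-1) ×ˢ Finset.Icc 1 (k-1) with hbox
        set T : ℕ × ℕ → Set (G.Walk u v) :=
          fun ij => {Q | Q ∈ S ∧ Q.getVert ij.2 = P₀.getVert ij.1} with hT
        -- fiber bound
        have hfib : ∀ ij ∈ box, (T ij).Finite ∧ (T ij).ncard ≤ f (k-2) * f (k-2) := by
          rintro ⟨i, j⟩ hij
          rw [hbox, Finset.mem_product, Finset.mem_Icc, Finset.mem_Icc] at hij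
          obtain ⟨⟨hi1, hik⟩, hj1, hjk⟩ := hij
          set w := P₀.getVert i with hw
          obtain ⟨hAfin, hAcard⟩ := ih j (by omega) (by omega) (by omega) u w
          obtain ⟨hBfin, hBcard⟩ := ih (k - j) (by omega) (by omega) (by omega) w v
          set A := {p : G.Walk u w | p.IsPath ∧ p.length = j} with hA
          set B := {p : G.Walk w v | p.IsPath ∧ p.length = k - j} with hB
          rcases (T (i, j)).eq_empty_or_nonempty with hTe | ⟨Q₀, hQ₀⟩
          · rw [hTe]
            simp [Set.ncard_empty]
          · have hQ₀mem : w ∈ Q₀.support :=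
              Walk.mem_support_iff_exists_getVert.mpr ⟨j, hQ₀.2, by rw [hQ₀.1.2]; omega⟩
            set F : G.Walk u v → G.Walk u w × G.Walk w v := fun Q =>
              if h : w ∈ Q.support then (Q.takeUntil w h, Q.dropUntil w h)
              else (Q₀.takeUntil w hQ₀mem, Q₀.dropUntil w hQ₀mem) with hF
            have hmem : ∀ Q ∈ T (i, j), w ∈ Q.support := by
              rintro Q ⟨hQS, hQj⟩
              exact Walk.mem_support_iff_exists_getVert.mpr ⟨j, hQj, by rw [hQS.2]; omega⟩
            have hFtake : ∀ Q (h : w ∈ Q.support),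
                F Q = (Q.takeUntil w h, Q.dropUntil w h) := by
              intro Q h
              rw [hF]
              simp [h]
            have hmapsTo : ∀ Q ∈ T (i, j), F Q ∈ A ×ˢ B := by
              rintro Q hQT
              obtain ⟨hQS, hQj⟩ := hQT
              have h := hmem Q ⟨hQS, hQj⟩
              rw [hFtake Q h]
              have htl : (Q.takeUntil w h).length = j :=
                length_takeUntil hQS.1 h hQj (by rw [hQS.2]; omega)
              constructor
              · exact ⟨hQS.1.takeUntil h, htl⟩
              · refine ⟨hQS.1.dropUntil h, ?_⟩
                rw [length_dropUntil, htl, hQS.2]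
            have hinj : Set.InjOn F (T (i, j)) := by
              rintro Q hQT Q' hQT' hFeq
              have h := hmem Q hQT
              have h' := hmem Q' hQT'
              rw [hFtake Q h, hFtake Q' h', Prod.mk.injEq] at hFeq
              rw [← Q.take_spec h, ← Q'.take_spec h', hFeq.1]
              congr 1
              exact hFeq.2
            have hABfin : (A ×ˢ B).Finite := hAfin.prod hBfin
            have hTfin : (T (i, j)).Finite := by
              refine Set.Finite.of_finite_image ?_ hinj
              exact hABfin.subset (Set.image_subset_iff.mpr hmapsTo)
            refine ⟨hTfin, ?_⟩
            calc (T (i, j)).ncard ≤ (A ×ˢ B).ncard :=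
                  Set.ncard_le_ncard_of_injOn F hmapsTo hinj hABfin
              _ = A.ncard * B.ncard := ncard_prod A B
              _ ≤ f (k-2) * f (k-2) := by
                  refine Nat.mul_le_mul (le_trans hAcard (f_mono (by omega)))
                    (le_trans hBcard (f_mono (by omega)))
        -- coverage
        have hNCk : ∀ (x : V) (c : G.Walk x x), c.IsCycle → c.length ≠ 2 * P₀.length := by
          rw [hP₀len]
          exact hNC k (by omega) hkl
        have hcov : S ⊆ insert P₀ (⋃ ij ∈ box, T ij) := by
          intro Q hQ
          by_cases hQP : Q = P₀
          · exact Set.mem_insert_iff.mpr (Or.inl hQP)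
          · right
            obtain ⟨i, j, hi1, hik, hj1, hjk, hPQ⟩ :=
              exists_shared_internal hP₀path hQ.1 (by omega) (by rw [hP₀len, hQ.2])
                (Ne.symm hQP) hNCk
            rw [hP₀len] at hik hjk
            rw [Set.mem_iUnion₂]
            refine ⟨(i, j), ?_, hQ, hPQ.symm⟩
            rw [hbox, Finset.mem_product, Finset.mem_Icc, Finset.mem_Icc]
            exact ⟨⟨hi1, hik⟩, hj1, hjk⟩
        have hUfin : (⋃ ij ∈ box, T ij).Finite :=
          Set.Finite.biUnion box.finite_toSet (fun ij hij => (hfib ij hij).1)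
        have hfin : S.Finite := (hUfin.insert P₀).subset hcov
        refine ⟨hfin, ?_⟩
        have hboxcard : box.card = (k-1) * (k-1) := by
          rw [hbox, Finset.card_product, Nat.card_Icc]
          simp
        calc S.ncard ≤ (insert P₀ (⋃ ij ∈ box, T ij)).ncard :=
              Set.ncard_le_ncard hcov (hUfin.insert P₀)
          _ ≤ (⋃ ij ∈ box, T ij).ncard + 1 := Set.ncard_insert_le _ _
          _ ≤ (∑ ij ∈ box, (T ij).ncard) + 1 :=
              Nat.add_le_add_right (ncard_biUnion_le box T) 1
          _ ≤ (∑ _ij ∈ box, f (k-2) * f (k-2)) + 1 := by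
              refine Nat.add_le_add_right (Finset.sum_le_sum (fun ij hij => (hfib ij hij).2)) 1
          _ = (k-1) * (k-1) * (f (k-2) * f (k-2)) + 1 := by
              rw [Finset.sum_const, hboxcard, smul_eq_mul]
          _ ≤ f (k - 1) := by
              have hk1eq : k - 1 = (k - 2) + 1 := by omega
              rw [hk1eq, f]
              have hle : (k-2+1) * (k-2+1) ≤ (k-2+2) * (k-2+2) :=
                Nat.mul_le_mul (by omega) (by omega)
              have h1 : (k-2+1) * (k-2+1) * (f (k-2) * f (k-2)) ≤
                  (k-2+2) * (k-2+2) * f (k-2) * f (k-2) := by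
                calc (k-2+1) * (k-2+1) * (f (k-2) * f (k-2))
                    = (k-2+1) * (k-2+1) * f (k-2) * f (k-2) := by ring
                  _ ≤ (k-2+2) * (k-2+2) * f (k-2) * f (k-2) :=
                      Nat.mul_le_mul_right _ (Nat.mul_le_mul_right _ hle)
              omega
end LVAux

/-- (Lam–Verstraëte) For every `ℓ ≥ 1` there is a constant `D = D(ℓ)` such that in any
graph with no even cycle of length at most `2ℓ`, for any `1 ≤ k ≤ ℓ` and any vertices
`u, v`, the number of paths of length `k` from `u` to `v` is at most `D`. -/
theorem stmt16 (ℓ : ℕ) (hℓ : 1 ≤ ℓ) :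
    ∃ D : ℕ, ∀ k : ℕ, 1 ≤ k → k ≤ ℓ →
      ∀ (V : Type) (G : SimpleGraph V),
        (∀ j : ℕ, 2 ≤ j → j ≤ ℓ → ContainsNoCopy (cycleGraph (2 * j)) G) →
        ∀ u v : V, {p : G.Walk u v | p.IsPath ∧ p.length = k}.ncard ≤ D := by
  refine ⟨LVAux.f (ℓ - 1), ?_⟩
  intro k hk1 hkl V G hG u v
  have hNC : ∀ m, 2 ≤ m → m ≤ ℓ → ∀ (x : V) (c : G.Walk x x), c.IsCycle →
      c.length ≠ 2 * m := by
    intro m hm2 hml x c hc hlen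
    exact LVAux.false_of_cycle_of_noCopy (hG m hm2 hml) c hc hlen
  exact le_trans (LVAux.main_count ℓ hNC k hk1 hkl u v).2 (LVAux.f_mono (by omega))
end

section
/- For a path P_k of length k (k ≥ 1) and ℓ ≥ 1, the parameter β_ℓ(P_k) equals 1 + ⌊(k+ℓ−1)/(ℓ+1)⌋, where β_ℓ(H) is the maximum number of components in an induced subgraph of H all of whose components are either isolated vertices of degree one in H or paths of length ℓ−1 consisting only of vertices of degree two in H. -/
open SimpleGraph

/-- A valid component for the parameter `β_i(H)`: either a single vertex of degree one
in `H`, or the vertex set of an induced path of length `i - 1` all of whose vertices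
have degree two in `H`. -/
def IsBetaComponent {V : Type*} (H : SimpleGraph V) (i : ℕ) (s : Set V) : Prop :=
  (∃ v : V, s = {v} ∧ (H.neighborSet v).ncard = 1) ∨
  (∃ (a b : V) (p : H.Walk a b), p.IsPath ∧ p.length = i - 1 ∧
    s = {x : V | x ∈ p.support} ∧
    (∀ x ∈ p.support, (H.neighborSet x).ncard = 2) ∧
    (∀ x ∈ p.support, ∀ y ∈ p.support, H.Adj x y → s(x, y) ∈ p.edges))

/-- `β_i(H)`: the maximum number of components of an induced subgraph of `H` all of
whose components are isolated vertices of degree one in `H` or paths of length `i - 1`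
consisting of vertices of degree two in `H`. -/
noncomputable def beta {V : Type*} (H : SimpleGraph V) (i : ℕ) : ℕ :=
  sSup {n | ∃ f : Fin n → Set V,
    (∀ j, IsBetaComponent H i (f j)) ∧
    (∀ j j', j ≠ j' → ∀ x ∈ f j, ∀ y ∈ f j', x ≠ y ∧ ¬ H.Adj x y)}


open SimpleGraph List

namespace Stmt19Aux

lemma mem_range'_iff {m s n : ℕ} : m ∈ List.range' s n ↔ s ≤ m ∧ m < s + n := by
  rw [List.mem_range']
  constructor
  · rintro ⟨i, hi, rfl⟩; omega
  · intro h; exact ⟨m - s, by omega, by omega⟩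

lemma range'_concat_1 (s n : ℕ) : List.range' s (n + 1) = List.range' s n ++ [s + n] := by
  rw [List.range'_concat]
  simp

lemma list_interval : ∀ (l : List ℕ), l.Chain' (fun x y => x + 1 = y ∨ y + 1 = x) →
    l.Nodup → ∃ a, l = List.range' a l.length ∨ l = (List.range' a l.length).reverse := by
  intro l
  induction l with
  | nil => intro _ _; exact ⟨0, Or.inl rfl⟩
  | cons x t ih =>
    intro hc hn
    rcases t with _ | ⟨y, t'⟩
    · exact ⟨x, Or.inl rfl⟩
    · have hc' : (y :: t').Chain' (fun x y => x + 1 = y ∨ y + 1 = x) := hc.tail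
      have hn' : (y :: t').Nodup := hn.of_cons
      have hxy : x + 1 = y ∨ y + 1 = x := (List.isChain_cons_cons.mp hc).1
      have hxnot : x ∉ y :: t' := (List.nodup_cons.mp hn).1
      obtain ⟨a, hcase⟩ := ih hc' hn'
      simp only [List.length_cons] at hcase ⊢
      set L := t'.length with hL
      rcases hcase with h1 | h2
      · -- y :: t' = range' a (L + 1)
        rw [List.range'_succ] at h1
        obtain ⟨hy, ht⟩ : y = a ∧ t' = List.range' (a + 1) L := by
          have := List.cons_eq_cons.mp h1; tauto
        rcases hxy with h | h
        · -- increasing, prepend: x + 1 = y = a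
          refine ⟨x, Or.inl ?_⟩
          have ha : a = x + 1 := by omega
          subst ha
          rw [ht, hy]
          simp [List.range'_succ]
        · -- x = y + 1 = a + 1
          rcases Nat.eq_zero_or_pos L with h0 | hpos
          · have ht' : t' = [] := List.eq_nil_of_length_eq_zero (by rw [← hL]; omega)
            subst ht'
            refine ⟨y, Or.inr ?_⟩
            simp only [hL, List.length_nil]
            rw [show List.range' y (0+1+1) = [y, y+1] from rfl]
            simp [← h]
          · exfalso
            apply hxnot
            rw [ht, hy] at *
            have : x ∈ List.range' (a + 1) L := mem_range'_iff.mpr (by omega)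
            exact List.mem_cons_of_mem _ this
      · -- y :: t' = (range' a (L+1)).reverse
        rw [range'_concat_1, List.reverse_append] at h2
        simp only [List.reverse_singleton, List.singleton_append] at h2
        obtain ⟨hy, ht⟩ : y = a + L ∧ t' = (List.range' a L).reverse := by
          have := List.cons_eq_cons.mp h2; tauto
        rcases hxy with h | h
        · -- x + 1 = y = a + L
          rcases Nat.eq_zero_or_pos L with h0 | hpos
          · have ht' : t' = [] := List.eq_nil_of_length_eq_zero (by rw [← hL]; omega)
            subst ht'
            refine ⟨x, Or.inl ?_⟩
            simp only [hL, List.length_nil]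
            rw [show List.range' x (0+1+1) = [x, x+1] from rfl]
            simp only [hL, List.length_nil, Nat.zero_add] at hy
            simp [h, hy]
          · exfalso
            apply hxnot
            rw [ht]
            refine List.mem_cons_of_mem _ ?_
            rw [List.mem_reverse]
            exact mem_range'_iff.mpr (by omega)
        · -- y + 1 = x, prepend at top
          refine ⟨a, Or.inr ?_⟩
          rw [range'_concat_1 a (L+1), List.reverse_append]
          simp only [List.reverse_singleton, List.singleton_append]
          rw [range'_concat_1 a L, List.reverse_append]
          simp only [List.reverse_singleton, List.singleton_append]
          rw [← ht, ← hy]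
          congr 1
          omega

end Stmt19Aux

open SimpleGraph List

namespace Stmt19Aux

lemma support_interval {n : ℕ} {u v : Fin n} (p : (pathGraph n).Walk u v) (hp : p.IsPath) :
    ∃ a, (∀ x : Fin n, x ∈ p.support ↔ a ≤ x.val ∧ x.val ≤ a + p.length) ∧
      (∀ m : ℕ, a ≤ m → m ≤ a + p.length → ∃ x ∈ p.support, x.val = m) := by
  have hchain : p.support.Chain' (pathGraph n).Adj := p.isChain_adj_support
  have hchain' : (p.support.map Fin.val).Chain' (fun x y => x + 1 = y ∨ y + 1 = x) := by
    show List.IsChain _ _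
    rw [List.isChain_map]
    exact List.IsChain.imp (fun a b hab => pathGraph_adj.mp hab) hchain
  have hnodup : (p.support.map Fin.val).Nodup :=
    hp.support_nodup.map (fun _ _ h => Fin.val_injective h)
  obtain ⟨a, hcase⟩ := list_interval _ hchain' hnodup
  have hlen : (p.support.map Fin.val).length = p.length + 1 := by
    rw [List.length_map, SimpleGraph.Walk.length_support]
  refine ⟨a, ?_, ?_⟩
  · intro x
    have hmem : x ∈ p.support ↔ x.val ∈ p.support.map Fin.val := by
      constructor
      · intro h; exact List.mem_map_of_mem h
      · intro h
        obtain ⟨y, hy, hyx⟩ := List.mem_map.mp h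
        rwa [Fin.val_injective hyx] at hy
    rw [hmem]
    rcases hcase with h | h
    · rw [h, hlen, mem_range'_iff]; omega
    · rw [h, hlen, List.mem_reverse, mem_range'_iff]; omega
  · intro m hm1 hm2
    have : m ∈ p.support.map Fin.val := by
      rcases hcase with h | h
      · rw [h, hlen]; exact mem_range'_iff.mpr (by omega)
      · rw [h, hlen, List.mem_reverse]; exact mem_range'_iff.mpr (by omega)
    obtain ⟨y, hy, hyx⟩ := List.mem_map.mp this
    exact ⟨y, hy, hyx⟩

lemma neighborSet_eq {k : ℕ} (v : Fin (k+1)) :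
    (pathGraph (k+1)).neighborSet v = {w : Fin (k+1) | v.val + 1 = w.val ∨ w.val + 1 = v.val} := by
  ext w
  simp only [mem_neighborSet, Set.mem_setOf_eq, pathGraph_adj]

lemma ncard_deg_left {k : ℕ} (hk : 1 ≤ k) (v : Fin (k+1)) (h : v.val = 0) :
    ((pathGraph (k+1)).neighborSet v).ncard = 1 := by
  rw [neighborSet_eq]
  have : {w : Fin (k+1) | v.val + 1 = w.val ∨ w.val + 1 = v.val} = {(⟨1, by omega⟩ : Fin (k+1))} := by
    ext w
    simp only [Set.mem_setOf_eq, Set.mem_singleton_iff, h]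
    constructor
    · rintro (h1 | h1)
      · exact Fin.ext (by simp; omega)
      · omega
    · rintro rfl; left; rfl
  rw [this, Set.ncard_singleton]

lemma ncard_deg_right {k : ℕ} (hk : 1 ≤ k) (v : Fin (k+1)) (h : v.val = k) :
    ((pathGraph (k+1)).neighborSet v).ncard = 1 := by
  rw [neighborSet_eq]
  have : {w : Fin (k+1) | v.val + 1 = w.val ∨ w.val + 1 = v.val} = {(⟨k-1, by omega⟩ : Fin (k+1))} := by
    ext w
    have hw := w.isLt
    simp only [Set.mem_setOf_eq, Set.mem_singleton_iff, h]
    constructor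
    · rintro (h1 | h1)
      · omega
      · exact Fin.ext (by simp; omega)
    · rintro rfl; right; simp; omega
  rw [this, Set.ncard_singleton]

lemma ncard_deg_mid {k : ℕ} (v : Fin (k+1)) (h1 : 0 < v.val) (h2 : v.val < k) :
    ((pathGraph (k+1)).neighborSet v).ncard = 2 := by
  rw [neighborSet_eq]
  have hv := v.isLt
  have : {w : Fin (k+1) | v.val + 1 = w.val ∨ w.val + 1 = v.val} =
      {(⟨v.val - 1, by omega⟩ : Fin (k+1)), (⟨v.val + 1, by omega⟩ : Fin (k+1))} := by
    ext w
    simp only [Set.mem_setOf_eq, Set.mem_insert_iff, Set.mem_singleton_iff]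
    constructor
    · rintro (h | h)
      · right; exact Fin.ext (by simp; omega)
      · left; exact Fin.ext (by simp; omega)
    · rintro (rfl | rfl)
      · right; simp; omega
      · left; simp
  rw [this]
  rw [Set.ncard_pair (by intro hcon; have h2 := congrArg Fin.val hcon; simp only [Fin.mk.injEq] at hcon; omega)]

lemma deg_one_val {k : ℕ} (hk : 1 ≤ k) (v : Fin (k+1))
    (h : ((pathGraph (k+1)).neighborSet v).ncard = 1) : v.val = 0 ∨ v.val = k := by
  by_contra hcon
  push_neg at hcon
  have := ncard_deg_mid v (by omega) (by have := v.isLt; omega)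
  omega

lemma deg_two_val {k : ℕ} (hk : 1 ≤ k) (v : Fin (k+1))
    (h : ((pathGraph (k+1)).neighborSet v).ncard = 2) : 0 < v.val ∧ v.val < k := by
  by_contra hcon
  have hv := v.isLt
  rcases Nat.eq_zero_or_pos v.val with h0 | hpos
  · have := ncard_deg_left hk v h0; omega
  · have hk' : v.val = k := by omega
    have := ncard_deg_right hk v hk'; omega

end Stmt19Aux

namespace Stmt19Aux

open SimpleGraph List

lemma component_spec {k ℓ : ℕ} (hk : 1 ≤ k) (hℓ : 1 ≤ ℓ) {s : Set (Fin (k+1))}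
    (h : IsBetaComponent (pathGraph (k+1)) ℓ s) :
    ∃ a b : ℕ, (∀ x : Fin (k+1), x ∈ s ↔ a ≤ x.val ∧ x.val ≤ b) ∧
      ((a = b ∧ (a = 0 ∨ a = k)) ∨ (b = a + ℓ - 1 ∧ 1 ≤ a ∧ b < k)) := by
  rcases h with ⟨v, rfl, hdeg⟩ | ⟨u, w, p, hpath, hlen, rfl, hdeg, _⟩
  · refine ⟨v.val, v.val, ?_, Or.inl ⟨rfl, deg_one_val hk v hdeg⟩⟩
    intro x
    simp only [Set.mem_singleton_iff]
    constructor
    · rintro rfl; omega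
    · intro hx; exact Fin.ext (by omega)
  · obtain ⟨a, hmem, hsurj⟩ := support_interval p hpath
    refine ⟨a, a + ℓ - 1, ?_, Or.inr ⟨rfl, ?_, ?_⟩⟩
    · intro x
      rw [Set.mem_setOf_eq, hmem x, hlen]
      omega
    · obtain ⟨x, hx, hxval⟩ := hsurj a le_rfl (by omega)
      have := deg_two_val hk x (hdeg x hx)
      omega
    · obtain ⟨x, hx, hxval⟩ := hsurj (a + p.length) (by omega) le_rfl
      have := deg_two_val hk x (hdeg x hx)
      rw [hlen] at hxval
      omega

end Stmt19Aux

namespace Stmt19Aux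

open SimpleGraph List

lemma arith {k ℓ e g : ℕ} (hℓ : 1 ≤ ℓ) (he : e ≤ 2) (hg : g = 0 ∨ 2 ≤ k)
    (h : 2*e + (ℓ+1)*g ≤ k + 2) : e + g ≤ 1 + (k + ℓ - 1)/(ℓ+1) := by
  have hpos : 0 < ℓ + 1 := by omega
  obtain ⟨d, hd⟩ : ∃ d, d = (k + ℓ - 1) / (ℓ + 1) := ⟨_, rfl⟩
  rw [← hd]
  rcases hg with rfl | hk2
  · -- g = 0
    rcases Nat.lt_or_ge e 2 with h1 | h1
    · omega
    · have he2 : e = 2 := by omega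
      subst he2
      have hk2 : 2 ≤ k := by omega
      have : 1 ≤ d := by rw [hd]; exact (Nat.one_le_div_iff hpos).mpr (by omega)
      omega
  · interval_cases e
    · -- e = 0 : show g ≤ 1 + d
      rcases Nat.eq_zero_or_pos g with rfl | hg1
      · omega
      have hgeq : g = (g - 1) + 1 := by omega
      have hA : (ℓ+1) * ((g-1) + 1) ≤ k + 2 := by rw [← hgeq]; omega
      rw [Nat.mul_add, Nat.mul_one] at hA
      have hB : (g - 1) * (ℓ+1) ≤ k + ℓ - 1 := by
        rw [Nat.mul_comm]; omega
      have : g - 1 ≤ d := by rw [hd]; exact (Nat.le_div_iff_mul_le hpos).mpr hB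
      omega
    · -- e = 1
      have hB : g * (ℓ+1) ≤ k + ℓ - 1 := by rw [Nat.mul_comm]; omega
      have : g ≤ d := by rw [hd]; exact (Nat.le_div_iff_mul_le hpos).mpr hB
      omega
    · -- e = 2
      have hA : (ℓ+1) * (g + 1) ≤ k + ℓ - 1 := by rw [Nat.mul_add, Nat.mul_one]; omega
      have hB : (g + 1) * (ℓ+1) ≤ k + ℓ - 1 := by rw [Nat.mul_comm]; exact hA
      have : g + 1 ≤ d := by rw [hd]; exact (Nat.le_div_iff_mul_le hpos).mpr hB
      omega

lemma upper {k ℓ n : ℕ} (hk : 1 ≤ k) (hℓ : 1 ≤ ℓ)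
    (hn : ∃ f : Fin n → Set (Fin (k+1)),
      (∀ j, IsBetaComponent (pathGraph (k+1)) ℓ (f j)) ∧
      (∀ j j', j ≠ j' → ∀ x ∈ f j, ∀ y ∈ f j', x ≠ y ∧ ¬ (pathGraph (k+1)).Adj x y)) :
    n ≤ 1 + (k + ℓ - 1) / (ℓ + 1) := by
  obtain ⟨f, h1, h2⟩ := hn
  choose A B hmem htype using fun j => component_spec hk hℓ (h1 j)
  have hAB : ∀ j, A j ≤ B j := by
    intro j; rcases htype j with ⟨h', _⟩ | ⟨h', h'', _⟩ <;> omega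
  have hBk : ∀ j, B j ≤ k := by
    intro j; rcases htype j with ⟨h', h''⟩ | ⟨h', h'', h'''⟩ <;> omega
  -- no two intervals touch or overlap
  have hno2 : ∀ j j', j ≠ j' → ∀ x y : ℕ, A j ≤ x → x ≤ B j → A j' ≤ y → y ≤ B j' →
      x ≠ y ∧ x + 1 ≠ y ∧ y + 1 ≠ x := by
    intro j j' hne x y hx1 hx2 hy1 hy2
    have hxk : x < k + 1 := by have := hBk j; omega
    have hyk : y < k + 1 := by have := hBk j'; omega
    have hu : (⟨x, hxk⟩ : Fin (k+1)) ∈ f j := (hmem j _).mpr ⟨hx1, hx2⟩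
    have hw : (⟨y, hyk⟩ : Fin (k+1)) ∈ f j' := (hmem j' _).mpr ⟨hy1, hy2⟩
    obtain ⟨hneq, hnadj⟩ := h2 j j' hne _ hu _ hw
    refine ⟨fun hcon => hneq (Fin.ext hcon), fun hcon => ?_, fun hcon => ?_⟩
    · exact hnadj (pathGraph_adj.mpr (Or.inl hcon))
    · exact hnadj (pathGraph_adj.mpr (Or.inr hcon))
  have hdisj : ∀ j j' : Fin n, j ≠ j' →
      Disjoint (Finset.Icc (A j) (B j + 1)) (Finset.Icc (A j') (B j' + 1)) := by
    intro j j' hne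
    rw [Finset.disjoint_left]
    intro x hx hx'
    rw [Finset.mem_Icc] at hx hx'
    rcases Nat.lt_or_ge x (B j + 1) with hxj | hxj
    · rcases Nat.lt_or_ge x (B j' + 1) with hxj' | hxj'
      · exact (hno2 j j' hne x x (by omega) (by omega) (by omega) (by omega)).1 rfl
      · have hx' : x = B j' + 1 := by omega
        exact (hno2 j j' hne x (B j') (by omega) (by omega) (hAB j') le_rfl).2.2 (by omega)
    · have hxx : x = B j + 1 := by omega
      rcases Nat.lt_or_ge x (B j' + 1) with hxj' | hxj'
      · exact (hno2 j j' hne (B j) x (hAB j) le_rfl (by omega) (by omega)).2.1 (by omega)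
      · have hx'' : x = B j' + 1 := by omega
        exact (hno2 j j' hne (B j) (B j') (hAB j) le_rfl (hAB j') le_rfl).1 (by omega)
  -- the blocks
  classical
  set Bk : Fin n → Finset ℕ := fun j => Finset.Icc (A j) (B j + 1) with hBkdef
  have hsub : Finset.univ.biUnion Bk ⊆ Finset.range (k + 2) := by
    intro x hx
    rw [Finset.mem_biUnion] at hx
    obtain ⟨j, _, hxj⟩ := hx
    rw [hBkdef, Finset.mem_Icc] at hxj
    rw [Finset.mem_range]
    have := hBk j
    omega
  have hsum : ∑ j : Fin n, (Bk j).card ≤ k + 2 := by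
    rw [← Finset.card_biUnion (fun x _ y _ hxy => hdisj x y hxy)]
    calc (Finset.univ.biUnion Bk).card ≤ (Finset.range (k+2)).card := Finset.card_le_card hsub
    _ = k + 2 := Finset.card_range _
  have hcard : ∀ j, (Bk j).card = B j - A j + 2 := by
    intro j
    rw [hBkdef, Nat.card_Icc]
    have := hAB j
    omega
  -- split into endpoint components and segment components
  set P : Fin n → Prop := fun j => A j = 0 ∨ A j = k with hPdef
  set E := Finset.univ.filter P with hE
  set G := Finset.univ.filter (fun j => ¬ P j) with hG
  have hEcard : ∀ j ∈ E, (Bk j).card = 2 := by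
    intro j hj
    rw [hE, Finset.mem_filter] at hj
    rcases htype j with ⟨hab, _⟩ | ⟨hab, ha1, hbk⟩
    · rw [hcard]; omega
    · exfalso
      rcases hj.2 with h0 | hk'
      · omega
      · have := hAB j; omega
  have hGcard : ∀ j ∈ G, (Bk j).card = ℓ + 1 := by
    intro j hj
    rw [hG, Finset.mem_filter] at hj
    rcases htype j with ⟨hab, hor⟩ | ⟨hab, ha1, hbk⟩
    · exact absurd hor hj.2
    · rw [hcard]; omega
  have hGk : G.card = 0 ∨ 2 ≤ k := by
    rcases Nat.eq_zero_or_pos G.card with h0 | hpos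
    · exact Or.inl h0
    · right
      obtain ⟨j, hj⟩ := Finset.card_pos.mp hpos
      rw [hG, Finset.mem_filter] at hj
      rcases htype j with ⟨hab, hor⟩ | ⟨hab, ha1, hbk⟩
      · exact absurd hor hj.2
      · have := hAB j; omega
  have hAinj : ∀ j ∈ E, ∀ j' ∈ E, A j = A j' → j = j' := by
    intro j _ j' _ hAeq
    by_contra hne
    exact (hno2 j j' hne (A j) (A j') le_rfl (hAB j) le_rfl (hAB j')).1 hAeq
  have hE2 : E.card ≤ 2 := by
    have himg : ∀ j ∈ E, A j ∈ ({0, k} : Finset ℕ) := by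
      intro j hj
      rw [hE, Finset.mem_filter] at hj
      rcases hj.2 with h0 | hk' <;>
        rw [Finset.mem_insert, Finset.mem_singleton] <;> omega
    calc E.card ≤ ({0, k} : Finset ℕ).card := Finset.card_le_card_of_injOn A himg hAinj
    _ ≤ 2 := Finset.card_insert_le _ _ |>.trans (by simp)
  have hsplit : ∑ j : Fin n, (Bk j).card = 2 * E.card + (ℓ+1) * G.card := by
    rw [← Finset.sum_filter_add_sum_filter_not Finset.univ P]
    rw [Finset.sum_congr rfl hEcard, Finset.sum_congr rfl hGcard]
    simp [Finset.sum_const, Nat.mul_comm]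
  have hncard : n = E.card + G.card := by
    rw [hE, hG]
    rw [Finset.card_filter_add_card_filter_not]
    simp
  rw [hncard]
  exact arith hℓ hE2 hGk (by omega)

end Stmt19Aux

namespace Stmt19Aux

open SimpleGraph List

lemma walk_exists (k : ℕ) : ∀ (m a : ℕ) (h : a + m ≤ k),
    ∃ p : (pathGraph (k+1)).Walk ⟨a, by omega⟩ ⟨a + m, by omega⟩,
      p.IsPath ∧ p.length = m ∧ p.support.map Fin.val = List.range' a (m+1) ∧
      p.edges.map (Sym2.map Fin.val) = (List.range' a m).map (fun i => s(i, i+1)) := by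
  intro m
  induction m with
  | zero =>
    intro a h
    refine ⟨SimpleGraph.Walk.nil, ?_, ?_, ?_, ?_⟩
    · exact SimpleGraph.Walk.IsPath.nil
    · rfl
    · rfl
    · rfl
  | succ m ih =>
    intro a h
    obtain ⟨q, hq1, hq2, hq3, hq4⟩ := ih (a+1) (by omega)
    have hadj : (pathGraph (k+1)).Adj ⟨a, by omega⟩ ⟨a+1, by omega⟩ :=
      pathGraph_adj.mpr (Or.inl rfl)
    have hend : (⟨a + 1 + m, by omega⟩ : Fin (k+1)) = ⟨a + (m+1), by omega⟩ :=
      Fin.ext (by simp; omega)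
    refine ⟨(SimpleGraph.Walk.cons hadj q).copy rfl hend, ?_, ?_, ?_, ?_⟩
    · rw [SimpleGraph.Walk.isPath_copy]
      rw [SimpleGraph.Walk.cons_isPath_iff]
      refine ⟨hq1, fun hmem => ?_⟩
      have : a ∈ q.support.map Fin.val := List.mem_map_of_mem hmem
      rw [hq3] at this
      have := mem_range'_iff.mp this
      omega
    · rw [SimpleGraph.Walk.length_copy, SimpleGraph.Walk.length_cons, hq2]
    · rw [SimpleGraph.Walk.support_copy, SimpleGraph.Walk.support_cons, List.map_cons, hq3]
      simp [List.range'_succ]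
    · rw [SimpleGraph.Walk.edges_copy, SimpleGraph.Walk.edges_cons, List.map_cons, hq4]
      rw [List.range'_succ, List.map_cons]
      simp [Sym2.map_pair_eq]

lemma seg_component {k ℓ : ℕ} (hk : 1 ≤ k) (hℓ : 1 ≤ ℓ) (a : ℕ) (ha : 1 ≤ a)
    (hb : a + ℓ - 1 < k) :
    IsBetaComponent (pathGraph (k+1)) ℓ {x : Fin (k+1) | a ≤ x.val ∧ x.val ≤ a + ℓ - 1} := by
  obtain ⟨p, hp1, hp2, hp3, hp4⟩ := walk_exists k (ℓ-1) a (by omega)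
  right
  have hsupmem : ∀ x : Fin (k+1), x ∈ p.support ↔ a ≤ x.val ∧ x.val ≤ a + ℓ - 1 := by
    intro x
    constructor
    · intro hx
      have : x.val ∈ p.support.map Fin.val := List.mem_map_of_mem hx
      rw [hp3] at this
      have := mem_range'_iff.mp this
      omega
    · intro hx
      have : x.val ∈ List.range' a (ℓ-1+1) := mem_range'_iff.mpr (by omega)
      rw [← hp3] at this
      obtain ⟨y, hy, hyx⟩ := List.mem_map.mp this
      rwa [Fin.val_injective hyx] at hy
  refine ⟨_, _, p, hp1, by rw [hp2], ?_, ?_, ?_⟩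
  · ext x
    rw [Set.mem_setOf_eq, Set.mem_setOf_eq, hsupmem x]
  · intro x hx
    have hxv := (hsupmem x).mp hx
    exact ncard_deg_mid x (by omega) (by omega)
  · intro x hx y hy hadj
    have hxv := (hsupmem x).mp hx
    have hyv := (hsupmem y).mp hy
    rcases pathGraph_adj.mp hadj with hxy | hxy
    · -- x.val + 1 = y.val
      have : s(x.val, x.val + 1) ∈ (List.range' a (ℓ-1)).map (fun i => s(i, i+1)) := by
        apply List.mem_map.mpr
        exact ⟨x.val, mem_range'_iff.mpr (by omega), rfl⟩
      rw [← hp4] at this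
      obtain ⟨e, he, hee⟩ := List.mem_map.mp this
      have : e = s(x, y) := by
        apply Sym2.map.injective Fin.val_injective
        rw [hee, Sym2.map_pair_eq, hxy]
      rwa [← this]
    · -- y.val + 1 = x.val
      have : s(y.val, y.val + 1) ∈ (List.range' a (ℓ-1)).map (fun i => s(i, i+1)) := by
        apply List.mem_map.mpr
        exact ⟨y.val, mem_range'_iff.mpr (by omega), rfl⟩
      rw [← hp4] at this
      obtain ⟨e, he, hee⟩ := List.mem_map.mp this
      have : e = s(x, y) := by
        apply Sym2.map.injective Fin.val_injective
        rw [hee, Sym2.map_pair_eq, hxy, Sym2.eq_swap]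
      rwa [← this]

lemma endpoint_component_left {k ℓ : ℕ} (hk : 1 ≤ k) :
    IsBetaComponent (pathGraph (k+1)) ℓ {x : Fin (k+1) | 0 ≤ x.val ∧ x.val ≤ 0} := by
  left
  refine ⟨⟨0, by omega⟩, ?_, ncard_deg_left hk _ rfl⟩
  ext x
  simp only [Set.mem_setOf_eq, Set.mem_singleton_iff]
  constructor
  · intro hx; exact Fin.ext (by show x.val = 0; omega)
  · rintro rfl; simp

lemma endpoint_component_right {k ℓ : ℕ} (hk : 1 ≤ k) :
    IsBetaComponent (pathGraph (k+1)) ℓ {x : Fin (k+1) | k ≤ x.val ∧ x.val ≤ k} := by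
  left
  refine ⟨⟨k, by omega⟩, ?_, ncard_deg_right hk _ rfl⟩
  ext x
  simp only [Set.mem_setOf_eq, Set.mem_singleton_iff]
  constructor
  · intro hx; exact Fin.ext (by simp; omega)
  · rintro rfl; simp

end Stmt19Aux

namespace Stmt19Aux

open SimpleGraph List

/-- Left endpoint of the `j`-th component in the optimal construction. -/
def lo (k ℓ : ℕ) : ℕ → ℕ
  | 0 => 0
  | 1 => k
  | (t+2) => 2 + t*(ℓ+1)

/-- Right endpoint of the `j`-th component in the optimal construction. -/
def hi (k ℓ : ℕ) : ℕ → ℕ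
  | 0 => 0
  | 1 => k
  | (t+2) => 1 + ℓ + t*(ℓ+1)

lemma lower {k ℓ : ℕ} (hk : 1 ≤ k) (hℓ : 1 ≤ ℓ) :
    ∃ f : Fin (1 + (k + ℓ - 1)/(ℓ+1)) → Set (Fin (k+1)),
      (∀ j, IsBetaComponent (pathGraph (k+1)) ℓ (f j)) ∧
      (∀ j j', j ≠ j' → ∀ x ∈ f j, ∀ y ∈ f j', x ≠ y ∧ ¬ (pathGraph (k+1)).Adj x y) := by
  rcases eq_or_lt_of_le hk with hk1 | hk2
  · -- k = 1
    have h1 : 1 + (k + ℓ - 1)/(ℓ+1) = 1 := by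
      rw [Nat.div_eq_of_lt (by omega)]
    rw [h1]
    refine ⟨fun _ => {x : Fin (k+1) | 0 ≤ x.val ∧ x.val ≤ 0},
      fun _ => endpoint_component_left hk, ?_⟩
    intro j j' hne
    exact absurd (Subsingleton.elim j j') hne
  · -- k ≥ 2
    have hq : ∃ q, q = (k - 2)/(ℓ+1) := ⟨_, rfl⟩
    obtain ⟨q, hq⟩ := hq
    have h2 : 1 + (k + ℓ - 1)/(ℓ+1) = 2 + q := by
      have he : k + ℓ - 1 = (k - 2) + (ℓ + 1) := by omega
      rw [he, Nat.add_div_right _ (by omega), hq]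
      omega
    rw [h2]
    have hqk : q * (ℓ+1) ≤ k - 2 := by rw [hq]; exact Nat.div_mul_le_self _ _
    -- bound on segment right endpoints
    have hiub : ∀ t, t < q → hi k ℓ (t+2) + 2 ≤ k := by
      intro t ht
      have hmul : (t+1)*(ℓ+1) ≤ q*(ℓ+1) := Nat.mul_le_mul_right _ (by omega)
      have hexp : (t+1)*(ℓ+1) = t*(ℓ+1) + (ℓ+1) := by ring
      show 1 + ℓ + t*(ℓ+1) + 2 ≤ k
      omega
    refine ⟨fun j => {x : Fin (k+1) | lo k ℓ j.val ≤ x.val ∧ x.val ≤ hi k ℓ j.val}, ?_, ?_⟩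
    · rintro ⟨jv, hjv⟩
      rcases jv with _ | (_ | t)
      · exact endpoint_component_left hk
      · exact endpoint_component_right hk
      · -- segment t
        have ht : t < q := by omega
        have h5 := hiub t ht
        simp only [hi] at h5
        have hb : 2 + t*(ℓ+1) + ℓ - 1 < k := by omega
        have hcomp := seg_component hk hℓ (2 + t*(ℓ+1)) (by omega) hb
        have heq : 2 + t*(ℓ+1) + ℓ - 1 = hi k ℓ (t+1+1) := by
          simp only [hi]; omega
        have hlo : 2 + t*(ℓ+1) = lo k ℓ (t+1+1) := by simp only [lo]
        rw [heq, hlo] at hcomp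
        exact hcomp
    · -- pairwise separation
      have hsep : ∀ u v : ℕ, u < 2 + q → v < 2 + q → u ≠ v →
          hi k ℓ u + 2 ≤ lo k ℓ v ∨ hi k ℓ v + 2 ≤ lo k ℓ u := by
        intro u v hu hv huv
        rcases u with _ | (_ | t) <;> rcases v with _ | (_ | t')
        · omega
        · left; show 0 + 2 ≤ k; omega
        · left; show 0 + 2 ≤ 2 + t'*(ℓ+1); omega
        · right; show 0 + 2 ≤ k; omega
        · omega
        · right
          have := hiub t' (by omega)
          show hi k ℓ (t'+2) + 2 ≤ k
          exact this
        · right; show 0 + 2 ≤ 2 + t*(ℓ+1); omega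
        · left
          have := hiub t (by omega)
          exact this
        · -- two segments
          have hne : t ≠ t' := by omega
          rcases Nat.lt_or_ge t t' with hlt | hge
          · left
            show 1 + ℓ + t*(ℓ+1) + 2 ≤ 2 + t'*(ℓ+1)
            have hmul : (t+1)*(ℓ+1) ≤ t'*(ℓ+1) := Nat.mul_le_mul_right _ (by omega)
            have hexp : (t+1)*(ℓ+1) = t*(ℓ+1) + (ℓ+1) := by ring
            omega
          · right
            show 1 + ℓ + t'*(ℓ+1) + 2 ≤ 2 + t*(ℓ+1)
            have hmul : (t'+1)*(ℓ+1) ≤ t*(ℓ+1) := Nat.mul_le_mul_right _ (by omega)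
            have hexp : (t'+1)*(ℓ+1) = t'*(ℓ+1) + (ℓ+1) := by ring
            omega
      intro j j' hne x hx y hy
      have hxv := hx
      have hyv := hy
      rw [Set.mem_setOf_eq] at hxv hyv
      have hjne : j.val ≠ j'.val := fun hcon => hne (Fin.ext hcon)
      have := hsep j.val j'.val j.isLt j'.isLt hjne
      constructor
      · intro hcon
        rw [hcon] at hxv
        omega
      · intro hadj
        rcases pathGraph_adj.mp hadj with hd | hd <;> omega

end Stmt19Aux


/-- For the path `P_k` with `k` edges (`k ≥ 1`) and any `ℓ ≥ 1`,
`β_ℓ(P_k) = 1 + ⌊(k + ℓ - 1) / (ℓ + 1)⌋`. -/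
theorem stmt19 (k ℓ : ℕ) (hk : 1 ≤ k) (hℓ : 1 ≤ ℓ) :
    beta (pathGraph (k + 1)) ℓ = 1 + (k + ℓ - 1) / (ℓ + 1) := by
  unfold beta
  apply _root_.le_antisymm
  · apply csSup_le
    · exact ⟨0, ⟨fun j => j.elim0, fun j => j.elim0, fun j => j.elim0⟩⟩
    · intro m hm
      exact Stmt19Aux.upper hk hℓ hm
  · apply le_csSup
    · exact ⟨1 + (k + ℓ - 1)/(ℓ+1), fun m hm => Stmt19Aux.upper hk hℓ hm⟩
    · exact Stmt19Aux.lower hk hℓ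
end
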